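/- arXiv:1602.08790 — 4 statements merged into one kernel-verified Lean document; each statement's English description precedes it below -/
import Mathlib

section
/- Let $(T_1,\lambda_1),(T_2,\lambda_2),(X_1,\mu_1),(X_2,\mu_2)$ be $\sigma$-finite measure spaces, and let $k_j$ be nonnegative $(\mu_j\times\lambda_j)$-measurable kernels for $j=1,2$. Define the product operator $Kf(x_1,x_2)=\iint k_1(x_1,t_1)k_2(x_2,t_2)f(t_1,t_2)\,d(\lambda_1\times\lambda_2)$ and factor operators $K_jg(x)=\int k_j(x,t)g(t)\,d\lambda_j$. Suppose $\|K_j g\|_{L^{r_j}_{\mu_j}}\le C_j\|g\|_{L^{p_j}_{\lambda_j}}$ for all nonnegative measurable $g$, with $p_1,p_2,r_1,r_2>0$ and $r_1\ge 1$. Then for all nonnegative $(\lambda_1\times\lambda_2)$-measurable $f$, $\|Kf\|_{L^{(r_1,r_2)}_{\mu_1\times\mu_2}}\le C_1C_2\|f\|_{L^{(p_1,p_2)}_{\lambda_1\times\lambda_2}}$. -/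
open MeasureTheory ENNReal

private lemma iSup_rpow_mono {u : ℕ → ℝ≥0∞} {r : ℝ} (hr : 0 < r) :
    (⨆ n, u n) ^ r = ⨆ n, u n ^ r := by
  refine Monotone.map_ciSup_of_continuousAt ENNReal.continuous_rpow_const.continuousAt
    (fun a b hab => ENNReal.rpow_le_rpow hab hr.le) ?_
  exact OrderTop.bddAbove _

/-- Minkowski's integral inequality, finite case. -/
private lemma minkowski_aux {X T : Type*} [MeasurableSpace X] [MeasurableSpace T]
    (μ : Measure X) (ν : Measure T) [SigmaFinite μ] [SigmaFinite ν]
    {r : ℝ} (hr : 1 < r)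
    (F : X → T → ℝ≥0∞) (hF : Measurable fun p : X × T => F p.1 p.2)
    (hG : ∀ x, (∫⁻ t, F x t ∂ν) ≠ ∞)
    (hA : (∫⁻ x, (∫⁻ t, F x t ∂ν) ^ r ∂μ) ≠ ∞) :
    (∫⁻ x, (∫⁻ t, F x t ∂ν) ^ r ∂μ) ^ (1/r) ≤ ∫⁻ t, (∫⁻ x, F x t ^ r ∂μ) ^ (1/r) ∂ν := by
  have hq : r.HolderConjugate (r / (r-1)) := Real.HolderConjugate.conjExponent hr
  set q : ℝ := r / (r - 1) with hqdef
  set G : X → ℝ≥0∞ := fun x => ∫⁻ t, F x t ∂ν with hGdef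
  set A : ℝ≥0∞ := ∫⁻ x, G x ^ r ∂μ with hAdef
  by_cases hA0 : A = 0
  · rw [hA0, ENNReal.zero_rpow_of_pos (by positivity)]
    exact zero_le
  have hGm : Measurable G := hF.lintegral_prod_right'
  have hGrm : Measurable fun x => G x ^ (r - 1) :=
    ENNReal.continuous_rpow_const.measurable.comp hGm
  have step1 : A = ∫⁻ t, ∫⁻ x, F x t * G x ^ (r-1) ∂μ ∂ν := by
    have h1 : ∀ x, G x ^ r = ∫⁻ t, F x t * G x ^ (r-1) ∂ν := by
      intro x
      rw [lintegral_mul_const' (G x ^ (r-1)) _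
        (ENNReal.rpow_ne_top_of_nonneg (by linarith) (hG x))]
      have h2 : G x ^ r = G x ^ ((1:ℝ)) * G x ^ (r-1) := by
        rw [← ENNReal.rpow_add_of_nonneg _ _ zero_le_one (by linarith)]
        congr 1; ring
      rw [h2, ENNReal.rpow_one]
    calc A = ∫⁻ x, ∫⁻ t, F x t * G x ^ (r-1) ∂ν ∂μ := by
            rw [hAdef]; exact lintegral_congr h1
      _ = ∫⁻ t, ∫⁻ x, F x t * G x ^ (r-1) ∂μ ∂ν :=
            lintegral_lintegral_swap (hF.mul (hGrm.comp measurable_fst)).aemeasurable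
  have step2 : ∀ t, ∫⁻ x, F x t * G x ^ (r-1) ∂μ
      ≤ (∫⁻ x, F x t ^ r ∂μ) ^ (1/r) * A ^ (1/q) := by
    intro t
    have hFt : AEMeasurable (fun x => F x t) μ :=
      (hF.comp (measurable_id.prodMk measurable_const)).aemeasurable
    have := ENNReal.lintegral_mul_le_Lp_mul_Lq μ hq hFt hGrm.aemeasurable
    refine le_trans (le_of_eq ?_) (this.trans (le_of_eq ?_))
    · rfl
    · congr 2
      refine lintegral_congr fun x => ?_
      rw [← ENNReal.rpow_mul, hq.sub_one_mul_conj]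
  have key : A ≤ (∫⁻ t, (∫⁻ x, F x t ^ r ∂μ) ^ (1/r) ∂ν) * A ^ (1/q) := by
    calc A = ∫⁻ t, ∫⁻ x, F x t * G x ^ (r-1) ∂μ ∂ν := step1
      _ ≤ ∫⁻ t, (∫⁻ x, F x t ^ r ∂μ) ^ (1/r) * A ^ (1/q) ∂ν := lintegral_mono step2
      _ = (∫⁻ t, (∫⁻ x, F x t ^ r ∂μ) ^ (1/r) ∂ν) * A ^ (1/q) :=
          lintegral_mul_const' _ _ (ENNReal.rpow_ne_top_of_nonneg hq.symm.one_div_nonneg hA)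
  have hsum : 1/r + 1/q = 1 := by
    have := hq.inv_add_inv_eq_one; rw [one_div, one_div]; linarith
  calc A ^ (1/r) = A ^ ((1:ℝ) + -(1/q)) := by congr 1; linarith
    _ = A * A ^ (-(1/q)) := by rw [ENNReal.rpow_add _ _ hA0 hA, ENNReal.rpow_one]
    _ ≤ ((∫⁻ t, (∫⁻ x, F x t ^ r ∂μ) ^ (1/r) ∂ν) * A ^ (1/q)) * A ^ (-(1/q)) :=
        mul_le_mul_left key _
    _ = (∫⁻ t, (∫⁻ x, F x t ^ r ∂μ) ^ (1/r) ∂ν) * (A ^ (1/q) * A ^ (-(1/q))) := by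
        rw [mul_assoc]
    _ = ∫⁻ t, (∫⁻ x, F x t ^ r ∂μ) ^ (1/r) ∂ν := by
        rw [← ENNReal.rpow_add _ _ hA0 hA, add_neg_cancel, ENNReal.rpow_zero, mul_one]

/-- Minkowski's integral inequality for `ℝ≥0∞`-valued functions. -/
private lemma minkowski_lintegral {X T : Type*} [MeasurableSpace X] [MeasurableSpace T]
    (μ : Measure X) (ν : Measure T) [SigmaFinite μ] [SigmaFinite ν]
    {r : ℝ} (hr : 1 ≤ r)
    (F : X → T → ℝ≥0∞) (hF : Measurable fun p : X × T => F p.1 p.2) :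
    (∫⁻ x, (∫⁻ t, F x t ∂ν) ^ r ∂μ) ^ (1/r) ≤ ∫⁻ t, (∫⁻ x, F x t ^ r ∂μ) ^ (1/r) ∂ν := by
  rcases eq_or_lt_of_le hr with hr1 | hr1
  · subst hr1
    simp only [ENNReal.rpow_one, one_div_one]
    exact le_of_eq (lintegral_lintegral_swap hF.aemeasurable)
  have hrpos : (0:ℝ) < r := by linarith
  -- truncation
  set s : ℕ → Set X := spanningSets μ with hs
  set u : ℕ → Set T := spanningSets ν with hu
  set Fn : ℕ → X → T → ℝ≥0∞ := fun n x t =>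
    (s n).indicator 1 x * (u n).indicator 1 t * (F x t ⊓ n) with hFndef
  have hFnm : ∀ n, Measurable fun p : X × T => Fn n p.1 p.2 := by
    intro n
    exact (((measurable_one.indicator (measurableSet_spanningSets μ n)).comp
      measurable_fst).mul ((measurable_one.indicator (measurableSet_spanningSets ν n)).comp
      measurable_snd)).mul (hF.min measurable_const)
  have hFnle : ∀ n x t, Fn n x t ≤ F x t := by
    intro n x t
    calc Fn n x t ≤ 1 * 1 * (F x t ⊓ n) := by
          refine mul_le_mul' (mul_le_mul' ?_ ?_) le_rfl <;>
            exact (Set.indicator_le' (fun _ _ => le_rfl) (fun _ _ => zero_le)) _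
      _ ≤ F x t := by rw [one_mul, one_mul]; exact inf_le_left
  have hFnmono : ∀ x t, Monotone fun n => Fn n x t := by
    intro x t n m hnm
    refine mul_le_mul' (mul_le_mul' ?_ ?_) (inf_le_inf le_rfl (by exact_mod_cast Nat.cast_le.2 hnm))
    · exact Set.indicator_le_indicator_of_subset (monotone_spanningSets μ hnm) (fun _ => zero_le) _
    · exact Set.indicator_le_indicator_of_subset (monotone_spanningSets ν hnm) (fun _ => zero_le) _
  have hFnsup : ∀ x t, (⨆ n, Fn n x t) = F x t := by
    intro x t
    refine le_antisymm (iSup_le fun n => hFnle n x t) ?_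
    obtain ⟨nx, hnx⟩ : ∃ n, x ∈ s n := by
      have : x ∈ ⋃ n, s n := by rw [hs, iUnion_spanningSets]; trivial
      exact Set.mem_iUnion.1 this
    obtain ⟨nt, hnt⟩ : ∃ n, t ∈ u n := by
      have : t ∈ ⋃ n, u n := by rw [hu, iUnion_spanningSets]; trivial
      exact Set.mem_iUnion.1 this
    have : F x t = ⨆ m : ℕ, F x t ⊓ m := by
      rw [← inf_iSup_eq, ENNReal.iSup_natCast, inf_top_eq]
    rw [this]
    refine iSup_le fun m => ?_
    refine le_trans ?_ (le_iSup _ (max m (max nx nt)))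
    have hxm : x ∈ s (max m (max nx nt)) :=
      monotone_spanningSets μ (le_trans (le_max_left _ _) (le_max_right _ _)) hnx
    have htm : t ∈ u (max m (max nx nt)) :=
      monotone_spanningSets ν (le_trans (le_max_right _ _) (le_max_right _ _)) hnt
    rw [hFndef]
    simp only [Set.indicator_of_mem hxm, Set.indicator_of_mem htm, Pi.one_apply, one_mul]
    exact inf_le_inf le_rfl (by exact_mod_cast Nat.cast_le.2 (le_max_left _ _))
  -- bounds on truncations
  have hFn_bound : ∀ n x t, Fn n x t ≤ (u n).indicator (fun _ => (n : ℝ≥0∞)) t := by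
    intro n x t
    by_cases ht : t ∈ u n
    · rw [Set.indicator_of_mem ht]
      calc Fn n x t ≤ 1 * 1 * (F x t ⊓ n) := by
            refine mul_le_mul' (mul_le_mul' ?_ ?_) le_rfl <;>
              exact (Set.indicator_le' (fun _ _ => le_rfl) (fun _ _ => zero_le)) _
        _ ≤ n := by rw [one_mul, one_mul]; exact inf_le_right
    · rw [Set.indicator_of_notMem ht, hFndef]
      simp [Set.indicator_of_notMem ht]
  have hGn_bound : ∀ n x, (∫⁻ t, Fn n x t ∂ν) ≤ (n : ℝ≥0∞) * ν (u n) := by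
    intro n x
    calc (∫⁻ t, Fn n x t ∂ν) ≤ ∫⁻ t, (u n).indicator (fun _ => (n : ℝ≥0∞)) t ∂ν :=
          lintegral_mono (hFn_bound n x)
      _ = (n : ℝ≥0∞) * ν (u n) := lintegral_indicator_const (measurableSet_spanningSets ν n) _
  have hGn_top : ∀ n x, (∫⁻ t, Fn n x t ∂ν) ≠ ∞ := by
    intro n x
    exact ne_top_of_le_ne_top
      (ENNReal.mul_ne_top (natCast_ne_top n) (measure_spanningSets_lt_top ν n).ne)
      (hGn_bound n x)
  have hGn_zero : ∀ n x, x ∉ s n → (∫⁻ t, Fn n x t ∂ν) = 0 := by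
    intro n x hx
    have : ∀ t, Fn n x t = 0 := by
      intro t; rw [hFndef]; simp [Set.indicator_of_notMem hx]
    simp [this]
  have hAn_top : ∀ n, (∫⁻ x, (∫⁻ t, Fn n x t ∂ν) ^ r ∂μ) ≠ ∞ := by
    intro n
    have hb : ∀ x, (∫⁻ t, Fn n x t ∂ν) ^ r
        ≤ (s n).indicator (fun _ => ((n : ℝ≥0∞) * ν (u n)) ^ r) x := by
      intro x
      by_cases hx : x ∈ s n
      · rw [Set.indicator_of_mem hx]
        exact ENNReal.rpow_le_rpow (hGn_bound n x) hrpos.le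
      · rw [Set.indicator_of_notMem hx, hGn_zero n x hx,
          ENNReal.zero_rpow_of_pos hrpos]
    refine ne_top_of_le_ne_top ?_ (lintegral_mono hb)
    rw [lintegral_indicator_const (measurableSet_spanningSets μ n)]
    exact ENNReal.mul_ne_top
      (ENNReal.rpow_ne_top_of_nonneg hrpos.le
        (ENNReal.mul_ne_top (natCast_ne_top n) (measure_spanningSets_lt_top ν n).ne))
      (measure_spanningSets_lt_top μ n).ne
  -- apply the finite case to each truncation
  have hstep : ∀ n, (∫⁻ x, (∫⁻ t, Fn n x t ∂ν) ^ r ∂μ) ^ (1/r)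
      ≤ ∫⁻ t, (∫⁻ x, F x t ^ r ∂μ) ^ (1/r) ∂ν := by
    intro n
    refine le_trans (minkowski_aux μ ν hr1 (Fn n) (hFnm n) (hGn_top n) (hAn_top n)) ?_
    refine lintegral_mono fun t => ?_
    refine ENNReal.rpow_le_rpow (lintegral_mono fun x => ?_) (by positivity)
    exact ENNReal.rpow_le_rpow (hFnle n x t) hrpos.le
  -- monotone convergence
  have hGnm : ∀ n, Measurable fun x => ∫⁻ t, Fn n x t ∂ν := fun n => (hFnm n).lintegral_prod_right'
  have hmono : Monotone fun n => fun x => (∫⁻ t, Fn n x t ∂ν) ^ r := by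
    intro n m hnm x
    exact ENNReal.rpow_le_rpow (lintegral_mono fun t => hFnmono x t hnm) hrpos.le
  have hlim : (∫⁻ x, (∫⁻ t, F x t ∂ν) ^ r ∂μ)
      = ⨆ n, ∫⁻ x, (∫⁻ t, Fn n x t ∂ν) ^ r ∂μ := by
    have hpt : ∀ x, (∫⁻ t, F x t ∂ν) ^ r = ⨆ n, (∫⁻ t, Fn n x t ∂ν) ^ r := by
      intro x
      rw [← iSup_rpow_mono hrpos]
      congr 1
      have := lintegral_iSup (μ := ν) (f := fun n t => Fn n x t)
        (fun n => (hFnm n).comp measurable_prodMk_left)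
        (fun n m hnm t => hFnmono x t hnm)
      rw [← this]
      exact lintegral_congr fun t => (hFnsup x t).symm
    rw [lintegral_congr hpt]
    exact lintegral_iSup (fun n => ENNReal.continuous_rpow_const.measurable.comp (hGnm n)) hmono
  rw [hlim, iSup_rpow_mono (by positivity : (0:ℝ) < 1/r)]
  exact iSup_le hstep

theorem product_operator_mixed_norm
    {T1 T2 X1 X2 : Type*} [MeasurableSpace T1] [MeasurableSpace T2]
    [MeasurableSpace X1] [MeasurableSpace X2]
    (lam1 : Measure T1) (lam2 : Measure T2) (mu1 : Measure X1) (mu2 : Measure X2)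
    [SigmaFinite lam1] [SigmaFinite lam2] [SigmaFinite mu1] [SigmaFinite mu2]
    (k1 : X1 → T1 → ℝ≥0∞) (k2 : X2 → T2 → ℝ≥0∞)
    (hk1 : Measurable fun p : X1 × T1 => k1 p.1 p.2)
    (hk2 : Measurable fun p : X2 × T2 => k2 p.1 p.2)
    (p1 p2 r1 r2 : ℝ) (C1 C2 : ℝ≥0∞)
    (hp1 : 0 < p1) (hp2 : 0 < p2) (hr1 : 0 < r1) (hr2 : 0 < r2)
    (hr1' : 1 ≤ r1) (hC1 : C1 ≠ ∞) (hC2 : C2 ≠ ∞)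
    (hK1 : ∀ g : T1 → ℝ≥0∞, Measurable g →
      (∫⁻ x, (∫⁻ t, k1 x t * g t ∂lam1) ^ r1 ∂mu1) ^ (1 / r1)
        ≤ C1 * (∫⁻ t, g t ^ p1 ∂lam1) ^ (1 / p1))
    (hK2 : ∀ g : T2 → ℝ≥0∞, Measurable g →
      (∫⁻ x, (∫⁻ t, k2 x t * g t ∂lam2) ^ r2 ∂mu2) ^ (1 / r2)
        ≤ C2 * (∫⁻ t, g t ^ p2 ∂lam2) ^ (1 / p2))
    (f : T1 × T2 → ℝ≥0∞) (hf : Measurable f) :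
    (∫⁻ x2, (∫⁻ x1,
        (∫⁻ t, k1 x1 t.1 * k2 x2 t.2 * f t ∂(lam1.prod lam2)) ^ r1 ∂mu1) ^ (r2 / r1)
      ∂mu2) ^ (1 / r2)
      ≤ C1 * C2 *
        (∫⁻ t2, (∫⁻ t1, f (t1, t2) ^ p1 ∂lam1) ^ (p2 / p1) ∂lam2) ^ (1 / p2) := by
  set F1 : X1 → T2 → ℝ≥0∞ := fun x1 t2 => ∫⁻ t1, k1 x1 t1 * f (t1, t2) ∂lam1 with hF1def
  have hF1m : Measurable fun p : X1 × T2 => F1 p.1 p.2 := by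
    have : Measurable fun q : (X1 × T2) × T1 => k1 q.1.1 q.2 * f (q.2, q.1.2) :=
      (hk1.comp (measurable_fst.fst.prodMk measurable_snd)).mul
        (hf.comp (measurable_snd.prodMk measurable_fst.snd))
    exact this.lintegral_prod_right'
  set g : T2 → ℝ≥0∞ := fun t2 => (∫⁻ t1, f (t1, t2) ^ p1 ∂lam1) ^ (1/p1) with hgdef
  have hgm : Measurable g := by
    have : Measurable fun q : T2 × T1 => f (q.2, q.1) ^ p1 :=
      ENNReal.continuous_rpow_const.measurable.comp
        (hf.comp (measurable_snd.prodMk measurable_fst))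
    exact ENNReal.continuous_rpow_const.measurable.comp this.lintegral_prod_right'
  -- Step A: rewrite the product integral as an iterated integral
  have stepA : ∀ x2 x1, (∫⁻ t, k1 x1 t.1 * k2 x2 t.2 * f t ∂(lam1.prod lam2))
      = ∫⁻ t2, k2 x2 t2 * F1 x1 t2 ∂lam2 := by
    intro x2 x1
    rw [lintegral_prod_symm' (fun t : T1 × T2 => k1 x1 t.1 * k2 x2 t.2 * f t)
      (show Measurable fun t : T1 × T2 => k1 x1 t.1 * k2 x2 t.2 * f t from by
        exact ((hk1.comp (measurable_const.prodMk measurable_fst)).mul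
          (hk2.comp (measurable_const.prodMk measurable_snd))).mul hf)]
    refine lintegral_congr fun t2 => ?_
    rw [hF1def, ← lintegral_const_mul (k2 x2 t2)
      (show Measurable fun t1 => k1 x1 t1 * f (t1, t2) from by
        exact (hk1.comp (measurable_const.prodMk measurable_id)).mul
          (hf.comp (measurable_id.prodMk measurable_const)))]
    exact lintegral_congr fun t1 => by ring
  -- Step B: Minkowski
  have stepB : ∀ x2, (∫⁻ x1, (∫⁻ t2, k2 x2 t2 * F1 x1 t2 ∂lam2) ^ r1 ∂mu1) ^ (1/r1)
      ≤ ∫⁻ t2, k2 x2 t2 * ((∫⁻ x1, F1 x1 t2 ^ r1 ∂mu1) ^ (1/r1)) ∂lam2 := by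
    intro x2
    have hm : Measurable fun p : X1 × T2 => k2 x2 p.2 * F1 p.1 p.2 :=
      (hk2.comp (measurable_const.prodMk measurable_snd)).mul hF1m
    refine le_trans (minkowski_lintegral mu1 lam2 hr1' (fun x1 t2 => k2 x2 t2 * F1 x1 t2) hm) ?_
    refine le_of_eq (lintegral_congr fun t2 => ?_)
    have h1 : ∀ x1, (k2 x2 t2 * F1 x1 t2) ^ r1 = k2 x2 t2 ^ r1 * F1 x1 t2 ^ r1 :=
      fun x1 => ENNReal.mul_rpow_of_nonneg _ _ hr1.le
    simp_rw [h1]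
    rw [lintegral_const_mul _ (show Measurable fun x1 => F1 x1 t2 ^ r1 from by
        exact ENNReal.continuous_rpow_const.measurable.comp
          (hF1m.comp (measurable_id.prodMk measurable_const))),
      ENNReal.mul_rpow_of_nonneg _ _ (by positivity : (0:ℝ) ≤ 1/r1),
      ← ENNReal.rpow_mul, mul_one_div_cancel hr1.ne', ENNReal.rpow_one]
  -- Step C
  have stepC : ∀ t2, (∫⁻ x1, F1 x1 t2 ^ r1 ∂mu1) ^ (1/r1) ≤ C1 * g t2 := by
    intro t2
    exact hK1 (fun t1 => f (t1, t2)) (hf.comp (measurable_id.prodMk measurable_const))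
  -- Combine pointwise bound for the inner norm
  have hN : ∀ x2, (∫⁻ x1,
      (∫⁻ t, k1 x1 t.1 * k2 x2 t.2 * f t ∂(lam1.prod lam2)) ^ r1 ∂mu1) ^ (1/r1)
      ≤ C1 * ∫⁻ t2, k2 x2 t2 * g t2 ∂lam2 := by
    intro x2
    have h1 : (∫⁻ x1, (∫⁻ t, k1 x1 t.1 * k2 x2 t.2 * f t ∂(lam1.prod lam2)) ^ r1 ∂mu1)
        = ∫⁻ x1, (∫⁻ t2, k2 x2 t2 * F1 x1 t2 ∂lam2) ^ r1 ∂mu1 :=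
      lintegral_congr fun x1 => by rw [stepA x2 x1]
    rw [h1]
    refine le_trans (stepB x2) ?_
    have h2 : ∀ t2, k2 x2 t2 * ((∫⁻ x1, F1 x1 t2 ^ r1 ∂mu1) ^ (1/r1))
        ≤ C1 * (k2 x2 t2 * g t2) := by
      intro t2
      calc k2 x2 t2 * ((∫⁻ x1, F1 x1 t2 ^ r1 ∂mu1) ^ (1/r1))
          ≤ k2 x2 t2 * (C1 * g t2) := mul_le_mul_right (stepC t2) _
        _ = C1 * (k2 x2 t2 * g t2) := by ring
    refine le_trans (lintegral_mono h2) (le_of_eq ?_)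
    exact lintegral_const_mul' C1 _ hC1
  -- Final assembly
  have hrw : ∀ x2, (∫⁻ x1,
      (∫⁻ t, k1 x1 t.1 * k2 x2 t.2 * f t ∂(lam1.prod lam2)) ^ r1 ∂mu1) ^ (r2/r1)
      = ((∫⁻ x1,
      (∫⁻ t, k1 x1 t.1 * k2 x2 t.2 * f t ∂(lam1.prod lam2)) ^ r1 ∂mu1) ^ (1/r1)) ^ r2 := by
    intro x2
    rw [← ENNReal.rpow_mul]
    congr 1
    field_simp
  calc (∫⁻ x2, (∫⁻ x1,
        (∫⁻ t, k1 x1 t.1 * k2 x2 t.2 * f t ∂(lam1.prod lam2)) ^ r1 ∂mu1) ^ (r2/r1)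
      ∂mu2) ^ (1 / r2)
      ≤ (∫⁻ x2, (C1 * ∫⁻ t2, k2 x2 t2 * g t2 ∂lam2) ^ r2 ∂mu2) ^ (1/r2) := by
        refine ENNReal.rpow_le_rpow (lintegral_mono fun x2 => ?_) (by positivity)
        rw [hrw x2]
        exact ENNReal.rpow_le_rpow (hN x2) hr2.le
    _ = C1 * (∫⁻ x2, (∫⁻ t2, k2 x2 t2 * g t2 ∂lam2) ^ r2 ∂mu2) ^ (1/r2) := by
        have h3 : ∀ x2, (C1 * ∫⁻ t2, k2 x2 t2 * g t2 ∂lam2) ^ r2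
            = C1 ^ r2 * (∫⁻ t2, k2 x2 t2 * g t2 ∂lam2) ^ r2 :=
          fun x2 => ENNReal.mul_rpow_of_nonneg _ _ hr2.le
        simp_rw [h3]
        rw [lintegral_const_mul' _ _ (ENNReal.rpow_ne_top_of_nonneg hr2.le hC1),
          ENNReal.mul_rpow_of_nonneg _ _ (by positivity : (0:ℝ) ≤ 1/r2),
          ← ENNReal.rpow_mul, mul_one_div_cancel hr2.ne', ENNReal.rpow_one]
    _ ≤ C1 * (C2 * (∫⁻ t2, g t2 ^ p2 ∂lam2) ^ (1/p2)) :=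
        mul_le_mul_right (hK2 g hgm) _
    _ = C1 * C2 * (∫⁻ t2, (∫⁻ t1, f (t1, t2) ^ p1 ∂lam1) ^ (p2/p1) ∂lam2) ^ (1/p2) := by
        rw [← mul_assoc]
        congr 2
        refine lintegral_congr fun t2 => ?_
        rw [hgdef, ← ENNReal.rpow_mul]
        congr 1
        field_simp
end

section
/- With the setup of a product operator $K$ with kernels $k_1,k_2$ and factor operators $K_1,K_2$ satisfying $\|K_j g\|_{L^{r_j}_{\mu_j}}\le C_j\|g\|_{L^{p_j}_{\lambda_j}}$ for nonnegative $g$: if $r_1\ge 1$, $r_2\ge 1$, and $p_1\le p_2$, then for all nonnegative measurable $f$ on $T_1\times T_2$, $\|Kf\|_{L^{(r_1,r_2)}_{\mu_1\times\mu_2}}\le C_1C_2\|f\|_{L^{(p_2,p_1)}_{\lambda_2\times\lambda_1}}$, where the right-hand side is the permuted mixed norm integrating first in $t_2$ with exponent $p_2$ and then in $t_1$ with exponent $p_1$. -/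
open MeasureTheory ENNReal Filter

private lemma iSup_rpow_of_monotone {a : ℕ → ℝ≥0∞} (ha : Monotone a) {c : ℝ} (hc : 0 ≤ c) :
    (⨆ n, a n) ^ c = ⨆ n, a n ^ c := by
  have h1 : Tendsto (fun n => a n ^ c) atTop (nhds ((⨆ n, a n) ^ c)) :=
    (ENNReal.continuous_rpow_const.tendsto _).comp (tendsto_atTop_iSup ha)
  have h2 : Tendsto (fun n => a n ^ c) atTop (nhds (⨆ n, a n ^ c)) :=
    tendsto_atTop_iSup (fun n m h => ENNReal.rpow_le_rpow (ha h) hc)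
  exact tendsto_nhds_unique h1 h2

/-- Minkowski's integral inequality for `ℝ≥0∞`-valued functions. -/
private lemma lintegral_minkowski {α β : Type*} [MeasurableSpace α] [MeasurableSpace β]
    (μ : Measure α) (ν : Measure β) [SigmaFinite μ] [SigmaFinite ν]
    {F : α → β → ℝ≥0∞} (hF : Measurable (fun z : α × β => F z.1 z.2))
    {p : ℝ} (hp : 1 ≤ p) :
    (∫⁻ x, (∫⁻ y, F x y ∂ν) ^ p ∂μ) ^ (1 / p)
      ≤ ∫⁻ y, (∫⁻ x, F x y ^ p ∂μ) ^ (1 / p) ∂ν := by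
  rcases eq_or_lt_of_le hp with h | h
  · rw [← h]
    simp only [one_div_one, ENNReal.rpow_one]
    exact le_of_eq (lintegral_lintegral_swap hF.aemeasurable)
  have hp0 : (0 : ℝ) < p := lt_trans zero_lt_one h
  set q : ℝ := p / (p - 1) with hqdef
  have hpq : p.HolderConjugate q := Real.HolderConjugate.conjExponent h
  set G : α → ℝ≥0∞ := fun x => ∫⁻ y, F x y ∂ν with hGdef
  have hG : Measurable G := hF.lintegral_prod_right'
  set R : ℝ≥0∞ := ∫⁻ y, (∫⁻ x, F x y ^ p ∂μ) ^ (1 / p) ∂ν with hRdef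
  set Gn : ℕ → α → ℝ≥0∞ :=
    fun n x => (spanningSets μ n).indicator (fun x' => min (G x') n) x with hGndef
  have hGnmeas : ∀ n, Measurable (Gn n) := fun n =>
    (hG.min measurable_const).indicator (measurableSet_spanningSets μ n)
  have hGnmono : Monotone Gn := by
    intro n m hnm x
    simp only [hGndef, Set.indicator]
    by_cases hx : x ∈ spanningSets μ n
    · have hx' : x ∈ spanningSets μ m := monotone_spanningSets μ hnm hx
      simp only [hx, hx', if_true]
      exact min_le_min le_rfl (by exact_mod_cast Nat.cast_le.2 hnm)
    · simp [hx]
  have hGnle : ∀ n x, Gn n x ≤ G x := by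
    intro n x
    simp only [hGndef, Set.indicator]
    by_cases hx : x ∈ spanningSets μ n
    · simp [hx, min_le_left]
    · simp [hx]
  have hGniSup : ∀ x, ⨆ n, Gn n x = G x := by
    intro x
    obtain ⟨N, hN⟩ : ∃ N, x ∈ spanningSets μ N := by
      have := iUnion_spanningSets μ
      have hx : x ∈ ⋃ i, spanningSets μ i := by rw [this]; trivial
      exact Set.mem_iUnion.1 hx
    refine le_antisymm (iSup_le fun n => hGnle n x) ?_
    rcases eq_top_or_lt_top (G x) with hGx | hGx
    · rw [hGx, ← ENNReal.iSup_natCast]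
      refine iSup_le fun M => le_iSup_of_le (max N M) ?_
      have hxM : x ∈ spanningSets μ (max N M) := monotone_spanningSets μ (le_max_left _ _) hN
      have hval : Gn (max N M) x = min (G x) ((max N M : ℕ) : ℝ≥0∞) := by
        simp [hGndef, Set.indicator, hxM]
      rw [hval, hGx, min_eq_right le_top]
      exact_mod_cast Nat.cast_le.2 (le_max_right N M)
    · obtain ⟨n0, hn0⟩ := ENNReal.exists_nat_gt hGx.ne
      refine le_iSup_of_le (max N n0) ?_
      have hxM : x ∈ spanningSets μ (max N n0) := monotone_spanningSets μ (le_max_left _ _) hN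
      simp only [hGndef, Set.indicator, hxM, if_true]
      refine le_min le_rfl ?_
      calc G x ≤ (n0 : ℝ≥0∞) := hn0.le
        _ ≤ ((max N n0 : ℕ) : ℝ≥0∞) := by exact_mod_cast Nat.cast_le.2 (le_max_right _ _)
  set A : ℕ → ℝ≥0∞ := fun n => ∫⁻ x, Gn n x ^ p ∂μ with hAdef
  have hAlt : ∀ n, A n < ⊤ := by
    intro n
    have hb : ∀ x, Gn n x ^ p ≤ (spanningSets μ n).indicator (fun _ => (n : ℝ≥0∞) ^ p) x := by
      intro x
      simp only [hGndef, Set.indicator]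
      by_cases hx : x ∈ spanningSets μ n
      · simp only [hx, if_true]
        exact ENNReal.rpow_le_rpow (min_le_right _ _) hp0.le
      · simp [hx, ENNReal.zero_rpow_of_pos hp0]
    calc A n ≤ ∫⁻ x, (spanningSets μ n).indicator (fun _ => (n : ℝ≥0∞) ^ p) x ∂μ :=
          lintegral_mono hb
      _ = (n : ℝ≥0∞) ^ p * μ (spanningSets μ n) := by
          rw [lintegral_indicator (measurableSet_spanningSets μ n), setLIntegral_const]
      _ < ⊤ := ENNReal.mul_lt_top
          (ENNReal.rpow_lt_top_of_nonneg hp0.le (ENNReal.natCast_ne_top n))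
          (measure_spanningSets_lt_top μ n)
  have hmono_rpow : Monotone fun n => fun x => Gn n x ^ p :=
    fun n m hnm x => ENNReal.rpow_le_rpow (hGnmono hnm x) hp0.le
  have key : ∀ n, A n ≤ A n ^ (1 / q) * R := by
    intro n
    have hFy : ∀ y, Measurable fun x => F x y :=
      fun y => hF.comp (measurable_id.prodMk measurable_const)
    have hFx : ∀ x, Measurable fun y => F x y :=
      fun x => hF.comp (measurable_const.prodMk measurable_id)
    have h1 : A n ≤ ∫⁻ x, Gn n x ^ (p - 1) * G x ∂μ := by
      refine lintegral_mono fun x => ?_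
      have hsp : Gn n x ^ p = Gn n x ^ (p - 1) * Gn n x ^ (1 : ℝ) := by
        rw [← ENNReal.rpow_add_of_nonneg _ _ (by linarith) zero_le_one, sub_add_cancel]
      rw [hsp, ENNReal.rpow_one]
      exact mul_le_mul_right (hGnle n x) _
    have h2 : ∫⁻ x, Gn n x ^ (p - 1) * G x ∂μ
        = ∫⁻ y, ∫⁻ x, Gn n x ^ (p - 1) * F x y ∂μ ∂ν := by
      have h2a : ∀ x, Gn n x ^ (p - 1) * G x = ∫⁻ y, Gn n x ^ (p - 1) * F x y ∂ν := by
        intro x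
        exact (lintegral_const_mul _ (hFx x)).symm
      simp_rw [h2a]
      exact lintegral_lintegral_swap
        ((((hGnmeas n).comp measurable_fst).pow_const _).mul hF).aemeasurable
    have h3 : ∀ y, ∫⁻ x, Gn n x ^ (p - 1) * F x y ∂μ
        ≤ A n ^ (1 / q) * (∫⁻ x, F x y ^ p ∂μ) ^ (1 / p) := by
      intro y
      have hhold := ENNReal.lintegral_mul_le_Lp_mul_Lq μ hpq.symm
        (((hGnmeas n).pow_const (p - 1)).aemeasurable) ((hFy y).aemeasurable)
      refine le_trans hhold ?_
      have : ∀ x, (Gn n x ^ (p - 1)) ^ q = Gn n x ^ p := by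
        intro x
        rw [← ENNReal.rpow_mul, hpq.sub_one_mul_conj]
      simp_rw [this]
      exact le_rfl
    have h4 : Measurable fun y => (∫⁻ x, F x y ^ p ∂μ) ^ (1 / p) :=
      ((hF.pow_const p).lintegral_prod_left').pow_const _
    calc A n ≤ ∫⁻ x, Gn n x ^ (p - 1) * G x ∂μ := h1
      _ = ∫⁻ y, ∫⁻ x, Gn n x ^ (p - 1) * F x y ∂μ ∂ν := h2
      _ ≤ ∫⁻ y, A n ^ (1 / q) * (∫⁻ x, F x y ^ p ∂μ) ^ (1 / p) ∂ν := lintegral_mono h3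
      _ = A n ^ (1 / q) * R := by rw [hRdef, lintegral_const_mul _ h4]
  have hAle : ∀ n, A n ≤ R ^ p := by
    intro n
    rcases eq_or_ne (A n) 0 with h0 | h0
    · simp [h0]
    · have hAtop : A n ≠ ⊤ := (hAlt n).ne
      have hsplit : A n = A n ^ (1 / q) * A n ^ (1 / p) := by
        rw [← ENNReal.rpow_add _ _ h0 hAtop]
        have : 1 / q + 1 / p = 1 := by
          rw [one_div, one_div, add_comm]; exact hpq.inv_add_inv_eq_one
        rw [this, ENNReal.rpow_one]
      have hne0 : A n ^ (1 / q) ≠ 0 := by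
        rw [Ne, ENNReal.rpow_eq_zero_iff_of_pos hpq.symm.one_div_pos]
        exact h0
      have hnetop : A n ^ (1 / q) ≠ ⊤ := by
        exact (ENNReal.rpow_lt_top_of_nonneg hpq.symm.one_div_nonneg hAtop).ne
      have hABle : A n ^ (1 / q) * A n ^ (1 / p) ≤ A n ^ (1 / q) * R := by
        rw [← hsplit]; exact key n
      have h2 : A n ^ (1 / p) ≤ R := (ENNReal.mul_le_mul_iff_right hne0 hnetop).1 hABle
      calc A n = (A n ^ (1 / p)) ^ p := by
            rw [← ENNReal.rpow_mul, one_div_mul_cancel hp0.ne', ENNReal.rpow_one]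
        _ ≤ R ^ p := ENNReal.rpow_le_rpow h2 hp0.le
  have hGint : ∫⁻ x, G x ^ p ∂μ = ⨆ n, A n := by
    have hpt : ∀ x, G x ^ p = ⨆ n, Gn n x ^ p := by
      intro x
      rw [← hGniSup x, iSup_rpow_of_monotone (fun a b hab => hGnmono hab x) hp0.le]
    simp_rw [hpt]
    exact lintegral_iSup (fun n => (hGnmeas n).pow_const p) (fun a b hab x => hmono_rpow hab x)
  calc (∫⁻ x, (∫⁻ y, F x y ∂ν) ^ p ∂μ) ^ (1 / p) = (⨆ n, A n) ^ (1 / p) := by rw [← hGint]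
    _ ≤ (R ^ p) ^ (1 / p) := ENNReal.rpow_le_rpow (iSup_le hAle) (by positivity)
    _ = R := by rw [← ENNReal.rpow_mul, mul_one_div_cancel hp0.ne', ENNReal.rpow_one]

theorem product_operator_permuted_case_p1_le_p2
    {T1 T2 X1 X2 : Type*} [MeasurableSpace T1] [MeasurableSpace T2]
    [MeasurableSpace X1] [MeasurableSpace X2]
    (lam1 : Measure T1) (lam2 : Measure T2) (mu1 : Measure X1) (mu2 : Measure X2)
    [SigmaFinite lam1] [SigmaFinite lam2] [SigmaFinite mu1] [SigmaFinite mu2]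
    (k1 : X1 → T1 → ℝ≥0∞) (k2 : X2 → T2 → ℝ≥0∞)
    (hk1 : Measurable fun p : X1 × T1 => k1 p.1 p.2)
    (hk2 : Measurable fun p : X2 × T2 => k2 p.1 p.2)
    (p1 p2 r1 r2 : ℝ) (C1 C2 : ℝ≥0∞)
    (hp1 : 0 < p1) (hp2 : 0 < p2) (hr1 : 0 < r1) (hr2 : 0 < r2)
    (hr1' : 1 ≤ r1) (hr2' : 1 ≤ r2) (hpp : p1 ≤ p2)
    (hK1 : ∀ g : T1 → ℝ≥0∞, Measurable g →
      (∫⁻ x, (∫⁻ t, k1 x t * g t ∂lam1) ^ r1 ∂mu1) ^ (1 / r1)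
        ≤ C1 * (∫⁻ t, g t ^ p1 ∂lam1) ^ (1 / p1))
    (hK2 : ∀ g : T2 → ℝ≥0∞, Measurable g →
      (∫⁻ x, (∫⁻ t, k2 x t * g t ∂lam2) ^ r2 ∂mu2) ^ (1 / r2)
        ≤ C2 * (∫⁻ t, g t ^ p2 ∂lam2) ^ (1 / p2))
    (f : T1 × T2 → ℝ≥0∞) (hf : Measurable f) :
    (∫⁻ x2, (∫⁻ x1,
        (∫⁻ t, k1 x1 t.1 * k2 x2 t.2 * f t ∂(lam1.prod lam2)) ^ r1 ∂mu1) ^ (r2 / r1)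
      ∂mu2) ^ (1 / r2)
      ≤ C1 * C2 *
        (∫⁻ t1, (∫⁻ t2, f (t1, t2) ^ p2 ∂lam2) ^ (p1 / p2) ∂lam1) ^ (1 / p1) := by
  -- Notation
  set H : X1 → T2 → ℝ≥0∞ := fun x1 t2 => ∫⁻ t1, k1 x1 t1 * f (t1, t2) ∂lam1 with hHdef
  set φ : T2 → ℝ≥0∞ := fun t2 => (∫⁻ t1, f (t1, t2) ^ p1 ∂lam1) ^ (1 / p1) with hφdef
  have hHm : Measurable fun z : X1 × T2 => H z.1 z.2 := by
    apply Measurable.lintegral_prod_right'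
      (f := fun w : (X1 × T2) × T1 => k1 w.1.1 w.2 * f (w.2, w.1.2))
    exact (hk1.comp (measurable_fst.fst.prodMk measurable_snd)).mul
      (hf.comp (measurable_snd.prodMk measurable_fst.snd))
  have hφm : Measurable φ :=
    ((hf.pow_const p1).lintegral_prod_left').pow_const _
  -- Step 0: rewrite the inner double integral
  have hrw : ∀ x2 x1, (∫⁻ t, k1 x1 t.1 * k2 x2 t.2 * f t ∂(lam1.prod lam2))
      = ∫⁻ t2, k2 x2 t2 * H x1 t2 ∂lam2 := by
    intro x2 x1
    have hm : Measurable fun t : T1 × T2 => k1 x1 t.1 * k2 x2 t.2 * f t :=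
      ((hk1.comp (measurable_const.prodMk measurable_fst)).mul
        (hk2.comp (measurable_const.prodMk measurable_snd))).mul hf
    rw [lintegral_prod_symm _ hm.aemeasurable]
    refine lintegral_congr fun t2 => ?_
    have hm1 : Measurable fun t1 : T1 => k1 x1 t1 * f (t1, t2) :=
      (hk1.comp (measurable_const.prodMk measurable_id)).mul
        (hf.comp (measurable_id.prodMk measurable_const))
    show (∫⁻ t1, k1 x1 (t1, t2).1 * k2 x2 (t1, t2).2 * f (t1, t2) ∂lam1)
        = k2 x2 t2 * ∫⁻ t1, k1 x1 t1 * f (t1, t2) ∂lam1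
    rw [← lintegral_const_mul (k2 x2 t2) hm1]
    refine lintegral_congr fun t1 => ?_
    show k1 x1 t1 * k2 x2 t2 * f (t1, t2) = k2 x2 t2 * (k1 x1 t1 * f (t1, t2))
    ring
  -- Step 1+2: for each x2, bound the inner L^{r1} norm
  set ψ : X2 → ℝ≥0∞ := fun x2 => ∫⁻ t2, k2 x2 t2 * φ t2 ∂lam2 with hψdef
  have hI : ∀ x2, (∫⁻ x1, (∫⁻ t2, k2 x2 t2 * H x1 t2 ∂lam2) ^ r1 ∂mu1) ^ (1 / r1)
      ≤ C1 * ψ x2 := by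
    intro x2
    have hFm : Measurable fun z : X1 × T2 => k2 x2 z.2 * H z.1 z.2 :=
      (hk2.comp (measurable_const.prodMk measurable_snd)).mul hHm
    have hmink := lintegral_minkowski mu1 lam2
      (F := fun x1 t2 => k2 x2 t2 * H x1 t2) hFm hr1'
    refine le_trans hmink ?_
    have heq : ∀ t2, (∫⁻ x1, (k2 x2 t2 * H x1 t2) ^ r1 ∂mu1) ^ (1 / r1)
        = k2 x2 t2 * (∫⁻ x1, H x1 t2 ^ r1 ∂mu1) ^ (1 / r1) := by
      intro t2
      have hHx : Measurable fun x1 => H x1 t2 ^ r1 :=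
        (hHm.comp (measurable_id.prodMk measurable_const)).pow_const r1
      simp_rw [ENNReal.mul_rpow_of_nonneg _ _ hr1.le]
      rw [lintegral_const_mul _ hHx,
        ENNReal.mul_rpow_of_nonneg _ _ (by positivity : (0:ℝ) ≤ 1 / r1),
        ← ENNReal.rpow_mul, mul_one_div_cancel hr1.ne', ENNReal.rpow_one]
    calc ∫⁻ t2, (∫⁻ x1, (k2 x2 t2 * H x1 t2) ^ r1 ∂mu1) ^ (1 / r1) ∂lam2
        = ∫⁻ t2, k2 x2 t2 * (∫⁻ x1, H x1 t2 ^ r1 ∂mu1) ^ (1 / r1) ∂lam2 :=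
          lintegral_congr heq
      _ ≤ ∫⁻ t2, k2 x2 t2 * (C1 * φ t2) ∂lam2 := by
          refine lintegral_mono fun t2 => mul_le_mul_right ?_ _
          exact hK1 (fun t1 => f (t1, t2)) (hf.comp (measurable_id.prodMk measurable_const))
      _ = C1 * ψ x2 := by
          have hm2 : Measurable fun t2 : T2 => k2 x2 t2 * φ t2 :=
            (hk2.comp (measurable_const.prodMk measurable_id)).mul hφm
          simp_rw [mul_left_comm _ C1]
          exact lintegral_const_mul C1 hm2
  -- Step 3: outer norm
  have hψm : Measurable ψ := by
    apply Measurable.lintegral_prod_right' (f := fun z : X2 × T2 => k2 z.1 z.2 * φ z.2)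
    exact hk2.mul (hφm.comp measurable_snd)
  have hstep3 : (∫⁻ x2, (∫⁻ x1,
        (∫⁻ t, k1 x1 t.1 * k2 x2 t.2 * f t ∂(lam1.prod lam2)) ^ r1 ∂mu1) ^ (r2 / r1)
      ∂mu2) ^ (1 / r2) ≤ C1 * (C2 * (∫⁻ t2, φ t2 ^ p2 ∂lam2) ^ (1 / p2)) := by
    have hpt : ∀ x2, (∫⁻ x1,
        (∫⁻ t, k1 x1 t.1 * k2 x2 t.2 * f t ∂(lam1.prod lam2)) ^ r1 ∂mu1) ^ (r2 / r1)
        ≤ C1 ^ r2 * (ψ x2) ^ r2 := by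
      intro x2
      have h1 : (∫⁻ x1,
          (∫⁻ t, k1 x1 t.1 * k2 x2 t.2 * f t ∂(lam1.prod lam2)) ^ r1 ∂mu1) ^ (r2 / r1)
          = ((∫⁻ x1, (∫⁻ t2, k2 x2 t2 * H x1 t2 ∂lam2) ^ r1 ∂mu1) ^ (1 / r1)) ^ r2 := by
        simp_rw [hrw x2]
        rw [← ENNReal.rpow_mul, one_div_mul_eq_div]
      rw [h1, ← ENNReal.mul_rpow_of_nonneg _ _ hr2.le]
      exact ENNReal.rpow_le_rpow (hI x2) hr2.le
    calc (∫⁻ x2, (∫⁻ x1,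
        (∫⁻ t, k1 x1 t.1 * k2 x2 t.2 * f t ∂(lam1.prod lam2)) ^ r1 ∂mu1) ^ (r2 / r1)
      ∂mu2) ^ (1 / r2)
        ≤ (∫⁻ x2, C1 ^ r2 * (ψ x2) ^ r2 ∂mu2) ^ (1 / r2) :=
          ENNReal.rpow_le_rpow (lintegral_mono hpt) (by positivity)
      _ = C1 * (∫⁻ x2, (ψ x2) ^ r2 ∂mu2) ^ (1 / r2) := by
          rw [lintegral_const_mul _ (hψm.pow_const r2),
            ENNReal.mul_rpow_of_nonneg _ _ (by positivity : (0:ℝ) ≤ 1 / r2),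
            ← ENNReal.rpow_mul, mul_one_div_cancel hr2.ne', ENNReal.rpow_one]
      _ ≤ C1 * (C2 * (∫⁻ t2, φ t2 ^ p2 ∂lam2) ^ (1 / p2)) :=
          mul_le_mul_right (hK2 φ hφm) C1
  -- Step 4: permuted Minkowski on the right-hand side
  have hstep4 : (∫⁻ t2, φ t2 ^ p2 ∂lam2) ^ (1 / p2)
      ≤ (∫⁻ t1, (∫⁻ t2, f (t1, t2) ^ p2 ∂lam2) ^ (p1 / p2) ∂lam1) ^ (1 / p1) := by
    have hs : 1 ≤ p2 / p1 := (one_le_div hp1).2 hpp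
    have hFm : Measurable fun z : T2 × T1 => f (z.2, z.1) ^ p1 :=
      (hf.comp (measurable_snd.prodMk measurable_fst)).pow_const p1
    have hmink := lintegral_minkowski lam2 lam1
      (F := fun t2 t1 => f (t1, t2) ^ p1) hFm hs
    have h1 : ∀ t2, φ t2 ^ p2 = (∫⁻ t1, f (t1, t2) ^ p1 ∂lam1) ^ (p2 / p1) := by
      intro t2
      rw [hφdef, ← ENNReal.rpow_mul, one_div_mul_eq_div]
    have h2 : ∀ t1, (∫⁻ t2, (f (t1, t2) ^ p1) ^ (p2 / p1) ∂lam2) ^ (1 / (p2 / p1))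
        = (∫⁻ t2, f (t1, t2) ^ p2 ∂lam2) ^ (p1 / p2) := by
      intro t1
      rw [one_div_div]
      congr 1
      refine lintegral_congr fun t2 => ?_
      rw [← ENNReal.rpow_mul, mul_div_cancel₀ _ hp1.ne']
    simp_rw [h2] at hmink
    simp_rw [h1]
    have h3 : (∫⁻ t2, (∫⁻ t1, f (t1, t2) ^ p1 ∂lam1) ^ (p2 / p1) ∂lam2) ^ (1 / p2)
        = ((∫⁻ t2, (∫⁻ t1, f (t1, t2) ^ p1 ∂lam1) ^ (p2 / p1) ∂lam2) ^ (1 / (p2 / p1)))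
          ^ (1 / p1) := by
      rw [← ENNReal.rpow_mul, one_div_div]
      congr 1
      field_simp
    rw [h3]
    exact ENNReal.rpow_le_rpow hmink (by positivity)
  calc (∫⁻ x2, (∫⁻ x1,
        (∫⁻ t, k1 x1 t.1 * k2 x2 t.2 * f t ∂(lam1.prod lam2)) ^ r1 ∂mu1) ^ (r2 / r1)
      ∂mu2) ^ (1 / r2)
      ≤ C1 * (C2 * (∫⁻ t2, φ t2 ^ p2 ∂lam2) ^ (1 / p2)) := hstep3
    _ ≤ C1 * (C2 * (∫⁻ t1, (∫⁻ t2, f (t1, t2) ^ p2 ∂lam2) ^ (p1 / p2) ∂lam1) ^ (1 / p1)) :=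
        mul_le_mul_right (mul_le_mul_right hstep4 C2) C1
    _ = C1 * C2 * (∫⁻ t1, (∫⁻ t2, f (t1, t2) ^ p2 ∂lam2) ^ (p1 / p2) ∂lam1) ^ (1 / p1) := by
        rw [mul_assoc]
end

section
/- With the setup of a product operator $K$ with factor bounds: if $r_1\ge 1$, $r_2\ge 1$, and $\min(p_1,r_1)\le\max(p_2,r_2)$, then $\|Kf\|_{L^{(r_1,r_2)}_{\mu_1\times\mu_2}}\le C_1C_2\|f\|_{L^{(p_2,p_1)}_{\lambda_2\times\lambda_1}}$ for all nonnegative measurable $f$ on $T_1\times T_2$. -/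
open MeasureTheory ENNReal Function

section Mink

variable {A B : Type*} [MeasurableSpace A] [MeasurableSpace B]
  {μ : Measure A} {ν : Measure B}

/-- Minkowski's integral inequality for `lintegral`. -/
theorem mink_lintegral [SigmaFinite μ] [SigmaFinite ν] {F : A → B → ℝ≥0∞}
    (hF : Measurable (uncurry F)) {p : ℝ} (hp : 1 ≤ p) :
    (∫⁻ b, (∫⁻ a, F a b ∂μ) ^ p ∂ν) ^ (1 / p)
      ≤ ∫⁻ a, (∫⁻ b, F a b ^ p ∂ν) ^ (1 / p) ∂μ := by
  rcases eq_or_lt_of_le hp with hp1 | hp1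
  · simp only [← hp1, ENNReal.rpow_one, one_div_one]
    exact le_of_eq (lintegral_lintegral_swap hF.aemeasurable).symm
  have hp0 : (0:ℝ) < p := lt_trans zero_lt_one hp1
  set q : ℝ := p.conjExponent with hqdef
  have hpq : p.HolderConjugate q := Real.HolderConjugate.conjExponent hp1
  have hq0 : (0:ℝ) < q := hpq.symm.pos
  set R := ∫⁻ a, (∫⁻ b, F a b ^ p ∂ν) ^ (1 / p) ∂μ with hRdef
  by_cases hRtop : R = ∞
  · rw [hRtop]; exact le_top
  set φ : B → ℝ≥0∞ := fun b => ∫⁻ a, F a b ∂μ with hφdef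
  have hφm : Measurable φ := hF.lintegral_prod_left
  have hFb : ∀ b : B, Measurable fun a => F a b := fun b =>
    hF.comp (measurable_id.prodMk measurable_const)
  have hFa : ∀ a : A, Measurable (F a) := fun a =>
    hF.comp (measurable_const.prodMk measurable_id)
  have hFpm : Measurable (uncurry fun a b => F a b ^ p) := hF.pow_const p
  -- Key step: on pieces where the integral is finite, Hölder gives the bound.
  have key : ∀ s : Set B, MeasurableSet s → (∫⁻ b in s, φ b ^ p ∂ν) ≠ ∞ →
      (∫⁻ b in s, φ b ^ p ∂ν) ^ (1 / p) ≤ R := by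
    intro s hs hfin
    set T := ∫⁻ b in s, φ b ^ p ∂ν with hTdef
    rcases eq_or_ne T 0 with h0 | h0
    · rw [h0, ENNReal.zero_rpow_of_pos (by positivity)]; exact zero_le
    have hsplit : T = ∫⁻ b in s, φ b * φ b ^ (p - 1) ∂ν := by
      rw [hTdef]
      refine lintegral_congr fun b => ?_
      conv_lhs => rw [show p = 1 + (p - 1) by ring]
      rw [ENNReal.rpow_add_of_nonneg _ _ zero_le_one (by linarith), ENNReal.rpow_one]
    have hstep1 : T ≤ R * T ^ (1 / q) := by
      calc T = ∫⁻ b in s, φ b * φ b ^ (p - 1) ∂ν := hsplit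
        _ = ∫⁻ b in s, ∫⁻ a, F a b * φ b ^ (p - 1) ∂μ ∂ν := by
            refine lintegral_congr fun b => ?_
            rw [lintegral_mul_const _ (hFb b)]
        _ = ∫⁻ a, ∫⁻ b in s, F a b * φ b ^ (p - 1) ∂ν ∂μ := by
            exact lintegral_lintegral_swap
              (((hF.comp measurable_swap).mul
                ((hφm.comp measurable_fst).pow_const _)).aemeasurable)
        _ ≤ ∫⁻ a, (∫⁻ b in s, F a b ^ p ∂ν) ^ (1 / p) * T ^ (1 / q) ∂μ := by
            refine lintegral_mono fun a => ?_
            have hH := ENNReal.lintegral_mul_le_Lp_mul_Lq (ν.restrict s) hpq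
              (hFa a).aemeasurable ((hφm.pow_const (p-1)).aemeasurable)
            simp only [Pi.mul_apply] at hH
            refine le_trans hH (le_of_eq ?_)
            congr 1
            rw [hTdef]
            congr 1
            refine lintegral_congr fun b => ?_
            rw [← ENNReal.rpow_mul, hpq.sub_one_mul_conj]
        _ = (∫⁻ a, (∫⁻ b in s, F a b ^ p ∂ν) ^ (1 / p) ∂μ) * T ^ (1 / q) := by
            rw [lintegral_mul_const]
            exact (hFpm.lintegral_prod_right (ν := ν.restrict s)).pow_const _
        _ ≤ R * T ^ (1 / q) := by
            refine mul_le_mul_left (lintegral_mono fun a => ?_) _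
            exact ENNReal.rpow_le_rpow (setLIntegral_le_lintegral _ _) (by positivity)
    have hTq0 : T ^ (1 / q) ≠ 0 := by
      simp only [ne_eq, ENNReal.rpow_eq_zero_iff, not_or]
      exact ⟨fun h => h0 h.1, fun h => hfin h.1⟩
    have hTqt : T ^ (1 / q) ≠ ∞ :=
      ENNReal.rpow_ne_top_of_nonneg (by positivity) hfin
    refine (ENNReal.mul_le_mul_iff_left hTq0 hTqt).1 ?_
    calc T ^ (1 / p) * T ^ (1 / q)
        = T := by
          rw [← ENNReal.rpow_add_of_nonneg _ _ (by positivity) (by positivity)]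
          rw [show (1:ℝ)/p + 1/q = 1 by
            rw [one_div, one_div]; exact hpq.inv_add_inv_eq_one]
          exact ENNReal.rpow_one T
      _ ≤ R * T ^ (1 / q) := hstep1
  -- the null set where φ is infinite
  have hnull : ν {b | φ b = ∞} = 0 := by
    by_contra hpos
    have hcover : {b | φ b = ∞} = ⋃ m, spanningSets ν m ∩ {b | φ b = ∞} := by
      rw [← Set.iUnion_inter, iUnion_spanningSets, Set.univ_inter]
    have hex : ∃ m, ν (spanningSets ν m ∩ {b | φ b = ∞}) ≠ 0 := by
      by_contra hall
      push_neg at hall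
      exact hpos (by rw [hcover]; exact measure_iUnion_null hall)
    obtain ⟨m, hm⟩ := hex
    set E := spanningSets ν m ∩ {b | φ b = ∞} with hE
    have hEmeas : MeasurableSet E :=
      (measurableSet_spanningSets ν m).inter (hφm (measurableSet_singleton ∞))
    have hEfin : ν E ≠ ∞ :=
      ne_top_of_le_ne_top (measure_spanningSets_lt_top ν m).ne
        (measure_mono Set.inter_subset_left)
    have h1 : ∫⁻ b in E, φ b ∂ν = ∞ := by
      have heq : ∫⁻ b in E, φ b ∂ν = ∫⁻ _ in E, ∞ ∂ν :=
        setLIntegral_congr_fun hEmeas (fun b hb => hb.2)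
      rw [heq, setLIntegral_const]
      exact ENNReal.top_mul hm
    have h2 : ∫⁻ b in E, φ b ∂ν ≤ (ν E) ^ (1 / q) * R := by
      calc ∫⁻ b in E, φ b ∂ν = ∫⁻ a, ∫⁻ b in E, F a b ∂ν ∂μ := by
            exact lintegral_lintegral_swap ((hF.comp measurable_swap).aemeasurable)
        _ ≤ ∫⁻ a, (∫⁻ b in E, F a b ^ p ∂ν) ^ (1 / p) * (ν E) ^ (1 / q) ∂μ := by
            refine lintegral_mono fun a => ?_
            have hH := ENNReal.lintegral_mul_le_Lp_mul_Lq (ν.restrict E) hpq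
              (hFa a).aemeasurable (aemeasurable_const (b := (1:ℝ≥0∞)))
            simp only [Pi.mul_apply, mul_one, one_mul, ENNReal.one_rpow, lintegral_const,
              Measure.restrict_apply_univ] at hH
            exact hH
        _ = (∫⁻ a, (∫⁻ b in E, F a b ^ p ∂ν) ^ (1 / p) ∂μ) * (ν E) ^ (1 / q) := by
            rw [lintegral_mul_const]
            exact (hFpm.lintegral_prod_right (ν := ν.restrict E)).pow_const _
        _ ≤ (ν E) ^ (1 / q) * R := by
            rw [mul_comm]
            refine mul_le_mul_right (lintegral_mono fun a => ?_) _
            exact ENNReal.rpow_le_rpow (setLIntegral_le_lintegral _ _) (by positivity)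
    rw [h1] at h2
    exact ENNReal.mul_ne_top (ENNReal.rpow_ne_top_of_nonneg (by positivity) hEfin) hRtop
      (top_le_iff.1 h2)
  -- exhaustion
  set Bn : ℕ → Set B := fun n => spanningSets ν n ∩ {b | φ b ≤ (n : ℝ≥0∞)} with hBn
  have hBnMeas : ∀ n, MeasurableSet (Bn n) := fun n =>
    (measurableSet_spanningSets ν n).inter (hφm measurableSet_Iic)
  have hBnMono : Monotone Bn := fun m n h =>
    Set.inter_subset_inter (monotone_spanningSets ν h)
      (fun b hb => show φ b ≤ (n:ℝ≥0∞) from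
        le_trans (show φ b ≤ (m:ℝ≥0∞) from hb) (Nat.cast_le.2 h))
  have hBnFin : ∀ n, (∫⁻ b in Bn n, φ b ^ p ∂ν) ≠ ∞ := by
    intro n
    have hb : ∫⁻ b in Bn n, φ b ^ p ∂ν ≤ ((n:ℝ≥0∞)) ^ p * ν (spanningSets ν n) := by
      calc ∫⁻ b in Bn n, φ b ^ p ∂ν
          ≤ ∫⁻ _ in Bn n, ((n:ℝ≥0∞)) ^ p ∂ν :=
            setLIntegral_mono' (hBnMeas n) (fun b hb => ENNReal.rpow_le_rpow hb.2 hp0.le)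
        _ = ((n:ℝ≥0∞)) ^ p * ν (Bn n) := setLIntegral_const _ _
        _ ≤ ((n:ℝ≥0∞)) ^ p * ν (spanningSets ν n) :=
            mul_le_mul_right (measure_mono Set.inter_subset_left) _
    exact ne_top_of_le_ne_top
      (ENNReal.mul_ne_top (ENNReal.rpow_ne_top_of_nonneg hp0.le (by simp))
        (measure_spanningSets_lt_top ν n).ne) hb
  have hUnion : ∫⁻ b, φ b ^ p ∂ν = ⨆ n, ∫⁻ b in Bn n, φ b ^ p ∂ν := by
    have hU : ∫⁻ b, φ b ^ p ∂ν = ∫⁻ b in ⋃ n, Bn n, φ b ^ p ∂ν := by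
      rw [← lintegral_add_compl (fun b => φ b ^ p) (MeasurableSet.iUnion hBnMeas)]
      have hsub : (⋃ n, Bn n)ᶜ ⊆ {b | φ b = ∞} := by
        intro b hb
        by_contra hbne
        obtain ⟨n1, hn1⟩ : ∃ n, b ∈ spanningSets ν n := by
          have : b ∈ ⋃ n, spanningSets ν n := by
            rw [iUnion_spanningSets]; trivial
          exact Set.mem_iUnion.1 this
        obtain ⟨n2, hn2⟩ := ENNReal.exists_nat_gt (hbne)
        exact hb (Set.mem_iUnion.2 ⟨max n1 n2,
          ⟨monotone_spanningSets ν (le_max_left _ _) hn1,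
            le_trans hn2.le (Nat.cast_le.2 (le_max_right _ _))⟩⟩)
      rw [setLIntegral_measure_zero _ _ (measure_mono_null hsub hnull), add_zero]
    rw [hU, setLIntegral_iUnion_of_directed _ (hBnMono.directed_le)]
  have hfinal : ∫⁻ b, φ b ^ p ∂ν ≤ R ^ p := by
    rw [hUnion]
    refine iSup_le fun n => ?_
    calc ∫⁻ b in Bn n, φ b ^ p ∂ν
        = ((∫⁻ b in Bn n, φ b ^ p ∂ν) ^ (1 / p)) ^ p := by
          rw [← ENNReal.rpow_mul, one_div_mul_cancel hp0.ne', ENNReal.rpow_one]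
      _ ≤ R ^ p := ENNReal.rpow_le_rpow (key (Bn n) (hBnMeas n) (hBnFin n)) hp0.le
  calc (∫⁻ b, φ b ^ p ∂ν) ^ (1 / p) ≤ (R ^ p) ^ (1 / p) :=
        ENNReal.rpow_le_rpow hfinal (by positivity)
    _ = R := by rw [← ENNReal.rpow_mul, mul_one_div_cancel hp0.ne', ENNReal.rpow_one]

end Mink

section Swap

variable {A B : Type*} [MeasurableSpace A] [MeasurableSpace B]
  {μ : Measure A} {ν : Measure B}

/-- rearrangement helper -/
theorem rpow_div_eq_rpow_one_div_rpow (x : ℝ≥0∞) (t s : ℝ) :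
    x ^ (t / s) = (x ^ (1 / s)) ^ t := by
  rw [← ENNReal.rpow_mul]
  congr 1
  ring

/-- pulling a constant out of an `L^e` norm -/
theorem lintegral_const_mul_rpow {γ : Type*} [MeasurableSpace γ] (ρ : Measure γ)
    {c : ℝ≥0∞} {u : γ → ℝ≥0∞} (hu : Measurable u) {e : ℝ} (he : 0 < e) :
    (∫⁻ x, (c * u x) ^ e ∂ρ) ^ (1 / e) = c * (∫⁻ x, u x ^ e ∂ρ) ^ (1 / e) := by
  simp_rw [ENNReal.mul_rpow_of_nonneg _ _ he.le]
  rw [lintegral_const_mul _ (hu.pow_const e),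
    ENNReal.mul_rpow_of_nonneg _ _ (by positivity : (0:ℝ) ≤ 1 / e),
    ← ENNReal.rpow_mul, mul_one_div_cancel he.ne', ENNReal.rpow_one]

/-- Swapping the order in a mixed norm: the arrangement with the smaller exponent
inside is smaller. -/
theorem mixed_swap [SigmaFinite μ] [SigmaFinite ν] {u : A → B → ℝ≥0∞}
    (hu : Measurable (uncurry u)) {a b : ℝ} (ha : 0 < a) (hab : a ≤ b) :
    (∫⁻ y, (∫⁻ x, u x y ^ a ∂μ) ^ (b / a) ∂ν) ^ (1 / b)
      ≤ (∫⁻ x, (∫⁻ y, u x y ^ b ∂ν) ^ (a / b) ∂μ) ^ (1 / a) := by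
  have hb : (0:ℝ) < b := lt_of_lt_of_le ha hab
  have hp : 1 ≤ b / a := (one_le_div ha).2 hab
  have key := mink_lintegral (μ := μ) (ν := ν) (F := fun x y => u x y ^ a)
    (hu.pow_const a) hp
  have hinv : 1 / (b / a) = a / b := by
    field_simp
  rw [hinv] at key
  have hstep : ∀ x, (∫⁻ y, (u x y ^ a) ^ (b / a) ∂ν) = ∫⁻ y, u x y ^ b ∂ν := fun x =>
    lintegral_congr fun y => by
      rw [← ENNReal.rpow_mul]
      congr 1
      field_simp
  calc (∫⁻ y, (∫⁻ x, u x y ^ a ∂μ) ^ (b / a) ∂ν) ^ (1 / b)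
      = ((∫⁻ y, (∫⁻ x, u x y ^ a ∂μ) ^ (b / a) ∂ν) ^ (a / b)) ^ (1 / a) := by
        rw [← ENNReal.rpow_mul]
        congr 1
        field_simp
    _ ≤ (∫⁻ x, (∫⁻ y, u x y ^ b ∂ν) ^ (a / b) ∂μ) ^ (1 / a) := by
        refine ENNReal.rpow_le_rpow ?_ (by positivity)
        refine le_trans key (le_of_eq (lintegral_congr fun x => ?_))
        rw [hstep x]

/-- Minkowski's integral inequality with a kernel weight. -/
theorem mink_kernel [SigmaFinite μ] [SigmaFinite ν] {w : A → ℝ≥0∞} (hw : Measurable w)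
    {g : A → B → ℝ≥0∞} (hg : Measurable (uncurry g)) {p : ℝ} (hp : 1 ≤ p) :
    (∫⁻ y, (∫⁻ x, w x * g x y ∂μ) ^ p ∂ν) ^ (1 / p)
      ≤ ∫⁻ x, w x * (∫⁻ y, g x y ^ p ∂ν) ^ (1 / p) ∂μ := by
  have hp0 : (0:ℝ) < p := lt_of_lt_of_le zero_lt_one hp
  have key := mink_lintegral (μ := μ) (ν := ν) (F := fun x y => w x * g x y)
    ((hw.comp measurable_fst).mul hg) hp
  refine le_trans key (le_of_eq (lintegral_congr fun x => ?_))
  have hgx : Measurable (g x) := hg.comp (measurable_const.prodMk measurable_id)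
  calc (∫⁻ y, (w x * g x y) ^ p ∂ν) ^ (1 / p)
      = (∫⁻ y, (w x * g x y) ^ p ∂ν) ^ (1 / p) := rfl
    _ = w x * (∫⁻ y, g x y ^ p ∂ν) ^ (1 / p) :=
        lintegral_const_mul_rpow ν hgx hp0

end Swap

theorem product_operator_permuted_mixed_norm
    {T1 T2 X1 X2 : Type*} [MeasurableSpace T1] [MeasurableSpace T2]
    [MeasurableSpace X1] [MeasurableSpace X2]
    (lam1 : Measure T1) (lam2 : Measure T2) (mu1 : Measure X1) (mu2 : Measure X2)
    [SigmaFinite lam1] [SigmaFinite lam2] [SigmaFinite mu1] [SigmaFinite mu2]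
    (k1 : X1 → T1 → ℝ≥0∞) (k2 : X2 → T2 → ℝ≥0∞)
    (hk1 : Measurable fun p : X1 × T1 => k1 p.1 p.2)
    (hk2 : Measurable fun p : X2 × T2 => k2 p.1 p.2)
    (p1 p2 r1 r2 : ℝ) (C1 C2 : ℝ≥0∞)
    (hp1 : 0 < p1) (hp2 : 0 < p2) (hr1 : 0 < r1) (hr2 : 0 < r2)
    (hr1' : 1 ≤ r1) (hr2' : 1 ≤ r2) (hmm : min p1 r1 ≤ max p2 r2)
    (hK1 : ∀ g : T1 → ℝ≥0∞, Measurable g →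
      (∫⁻ x, (∫⁻ t, k1 x t * g t ∂lam1) ^ r1 ∂mu1) ^ (1 / r1)
        ≤ C1 * (∫⁻ t, g t ^ p1 ∂lam1) ^ (1 / p1))
    (hK2 : ∀ g : T2 → ℝ≥0∞, Measurable g →
      (∫⁻ x, (∫⁻ t, k2 x t * g t ∂lam2) ^ r2 ∂mu2) ^ (1 / r2)
        ≤ C2 * (∫⁻ t, g t ^ p2 ∂lam2) ^ (1 / p2))
    (f : T1 × T2 → ℝ≥0∞) (hf : Measurable f) :
    (∫⁻ x2, (∫⁻ x1,
        (∫⁻ t, k1 x1 t.1 * k2 x2 t.2 * f t ∂(lam1.prod lam2)) ^ r1 ∂mu1) ^ (r2 / r1)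
      ∂mu2) ^ (1 / r2)
      ≤ C1 * C2 *
        (∫⁻ t1, (∫⁻ t2, f (t1, t2) ^ p2 ∂lam2) ^ (p1 / p2) ∂lam1) ^ (1 / p1) := by
  -- sections of the kernels and of f
  have hk1s : ∀ x1, Measurable (k1 x1) := fun x1 =>
    hk1.comp (measurable_const.prodMk measurable_id)
  have hk2s : ∀ x2, Measurable (k2 x2) := fun x2 =>
    hk2.comp (measurable_const.prodMk measurable_id)
  have hfs1 : ∀ t1, Measurable fun t2 => f (t1, t2) := fun t1 =>
    hf.comp (measurable_const.prodMk measurable_id)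
  have hfs2 : ∀ t2, Measurable fun t1 => f (t1, t2) := fun t2 =>
    hf.comp (measurable_id.prodMk measurable_const)
  have hfu : Measurable (uncurry fun t1 t2 => f (t1, t2)) := hf
  -- the two partial operators
  set G : T1 → X2 → ℝ≥0∞ := fun t1 x2 => ∫⁻ t2, k2 x2 t2 * f (t1, t2) ∂lam2 with hGdef
  set H : X1 → T2 → ℝ≥0∞ := fun x1 t2 => ∫⁻ t1, k1 x1 t1 * f (t1, t2) ∂lam1 with hHdef
  have hGm : Measurable (uncurry G) := by
    apply Measurable.lintegral_prod_right
      (f := fun (z : T1 × X2) t2 => k2 z.2 t2 * f (z.1, t2))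
    exact (hk2.comp ((measurable_snd.comp measurable_fst).prodMk measurable_snd)).mul
      (hf.comp ((measurable_fst.comp measurable_fst).prodMk measurable_snd))
  have hHm : Measurable (uncurry H) := by
    apply Measurable.lintegral_prod_right
      (f := fun (z : X1 × T2) t1 => k1 z.1 t1 * f (t1, z.2))
    exact (hk1.comp ((measurable_fst.comp measurable_fst).prodMk measurable_snd)).mul
      (hf.comp (measurable_snd.prodMk (measurable_snd.comp measurable_fst)))
  -- Fubini identities
  have hKf1 : ∀ (x1 : X1) (x2 : X2),
      (∫⁻ t, k1 x1 t.1 * k2 x2 t.2 * f t ∂(lam1.prod lam2))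
        = ∫⁻ t1, k1 x1 t1 * G t1 x2 ∂lam1 := by
    intro x1 x2
    have hmeas : Measurable fun t : T1 × T2 => k1 x1 t.1 * k2 x2 t.2 * f t :=
      (((hk1s x1).comp measurable_fst).mul ((hk2s x2).comp measurable_snd)).mul hf
    rw [lintegral_prod _ hmeas.aemeasurable]
    refine lintegral_congr fun t1 => ?_
    simp_rw [mul_assoc]
    rw [lintegral_const_mul (f := fun t2 => k2 x2 t2 * f (t1, t2)) _ ((hk2s x2).mul (hfs1 t1))]
  have hKf2 : ∀ (x1 : X1) (x2 : X2),
      (∫⁻ t, k1 x1 t.1 * k2 x2 t.2 * f t ∂(lam1.prod lam2))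
        = ∫⁻ t2, k2 x2 t2 * H x1 t2 ∂lam2 := by
    intro x1 x2
    have hmeas : Measurable fun t : T1 × T2 => k1 x1 t.1 * k2 x2 t.2 * f t :=
      (((hk1s x1).comp measurable_fst).mul ((hk2s x2).comp measurable_snd)).mul hf
    rw [lintegral_prod_symm _ hmeas.aemeasurable]
    refine lintegral_congr fun t2 => ?_
    rw [← lintegral_const_mul (f := fun t1 => k1 x1 t1 * f (t1, t2)) _ ((hk1s x1).mul (hfs2 t2))]
    refine lintegral_congr fun t1 => ?_
    ring
  -- right-hand-side inner norm and its measurability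
  set ψ : T1 → ℝ≥0∞ := fun t1 => (∫⁻ t2, f (t1, t2) ^ p2 ∂lam2) ^ (1 / p2) with hψdef
  have hψm : Measurable ψ := by
    apply Measurable.pow_const
    exact Measurable.lintegral_prod_right
      (f := fun t1 t2 => f (t1, t2) ^ p2) (hf.pow_const p2)
  -- shared ending : from the (t2,p2)-(t1,p1) arrangement of G to the RHS
  have hend : (∫⁻ t1, (∫⁻ x2, G t1 x2 ^ r2 ∂mu2) ^ (p1 / r2) ∂lam1) ^ (1 / p1)
      ≤ C2 * (∫⁻ t1, (∫⁻ t2, f (t1, t2) ^ p2 ∂lam2) ^ (p1 / p2) ∂lam1) ^ (1 / p1) := by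
    calc (∫⁻ t1, (∫⁻ x2, G t1 x2 ^ r2 ∂mu2) ^ (p1 / r2) ∂lam1) ^ (1 / p1)
        ≤ (∫⁻ t1, (C2 * (∫⁻ t2, f (t1, t2) ^ p2 ∂lam2) ^ (1 / p2)) ^ p1 ∂lam1) ^ (1 / p1) := by
          refine ENNReal.rpow_le_rpow (lintegral_mono fun t1 => ?_) (by positivity)
          rw [rpow_div_eq_rpow_one_div_rpow _ p1 r2]
          exact ENNReal.rpow_le_rpow (hK2 _ (hfs1 t1)) hp1.le
      _ = C2 * (∫⁻ t1, ((∫⁻ t2, f (t1, t2) ^ p2 ∂lam2) ^ (1 / p2)) ^ p1 ∂lam1) ^ (1 / p1) :=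
          lintegral_const_mul_rpow lam1 hψm hp1
      _ = C2 * (∫⁻ t1, (∫⁻ t2, f (t1, t2) ^ p2 ∂lam2) ^ (p1 / p2) ∂lam1) ^ (1 / p1) := by
          congr 1
          refine congrArg (· ^ (1 / p1)) (lintegral_congr fun t1 => ?_)
          rw [← rpow_div_eq_rpow_one_div_rpow]
  rcases le_or_gt r1 r2 with hc1 | hc1
  · -- Case I : r1 ≤ r2
    set Φ : T1 → ℝ≥0∞ := fun t1 => (∫⁻ x2, G t1 x2 ^ r2 ∂mu2) ^ (1 / r2) with hΦdef
    have hΦm : Measurable Φ := by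
      apply Measurable.pow_const
      exact Measurable.lintegral_prod_right
        (f := fun t1 x2 => G t1 x2 ^ r2) (hGm.pow_const r2)
    have hKGm : Measurable (uncurry fun x1 x2 => ∫⁻ t1, k1 x1 t1 * G t1 x2 ∂lam1) := by
      apply Measurable.lintegral_prod_right
        (f := fun (z : X1 × X2) t1 => k1 z.1 t1 * G t1 z.2)
      exact (hk1.comp ((measurable_fst.comp measurable_fst).prodMk measurable_snd)).mul
        (hGm.comp (measurable_snd.prodMk (measurable_snd.comp measurable_fst)))
    simp only [hKf1]
    calc (∫⁻ x2, (∫⁻ x1, (∫⁻ t1, k1 x1 t1 * G t1 x2 ∂lam1) ^ r1 ∂mu1) ^ (r2 / r1) ∂mu2)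
          ^ (1 / r2)
        ≤ (∫⁻ x1, (∫⁻ x2, (∫⁻ t1, k1 x1 t1 * G t1 x2 ∂lam1) ^ r2 ∂mu2) ^ (r1 / r2) ∂mu1)
          ^ (1 / r1) := mixed_swap hKGm hr1 hc1
      _ ≤ (∫⁻ x1, (∫⁻ t1, k1 x1 t1 * Φ t1 ∂lam1) ^ r1 ∂mu1) ^ (1 / r1) := by
          refine ENNReal.rpow_le_rpow (lintegral_mono fun x1 => ?_) (by positivity)
          rw [rpow_div_eq_rpow_one_div_rpow _ r1 r2]
          refine ENNReal.rpow_le_rpow ?_ hr1.le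
          exact mink_kernel (hk1s x1) hGm hr2'
      _ ≤ C1 * (∫⁻ t1, Φ t1 ^ p1 ∂lam1) ^ (1 / p1) := hK1 Φ hΦm
      _ = C1 * (∫⁻ t1, (∫⁻ x2, G t1 x2 ^ r2 ∂mu2) ^ (p1 / r2) ∂lam1) ^ (1 / p1) := by
          congr 1
          refine congrArg (· ^ (1 / p1)) (lintegral_congr fun t1 => ?_)
          rw [hΦdef, ← rpow_div_eq_rpow_one_div_rpow]
      _ ≤ C1 * (C2 * (∫⁻ t1, (∫⁻ t2, f (t1, t2) ^ p2 ∂lam2) ^ (p1 / p2) ∂lam1) ^ (1 / p1)) :=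
          mul_le_mul_right hend _
      _ = C1 * C2 * (∫⁻ t1, (∫⁻ t2, f (t1, t2) ^ p2 ∂lam2) ^ (p1 / p2) ∂lam1) ^ (1 / p1) :=
          (mul_assoc _ _ _).symm
  -- now r2 < r1.  A first step shared by the next two cases:
  have hstep12 : (∫⁻ x2, (∫⁻ x1, (∫⁻ t1, k1 x1 t1 * G t1 x2 ∂lam1) ^ r1 ∂mu1) ^ (r2 / r1)
        ∂mu2) ^ (1 / r2)
      ≤ C1 * (∫⁻ x2, (∫⁻ t1, G t1 x2 ^ p1 ∂lam1) ^ (r2 / p1) ∂mu2) ^ (1 / r2) := by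
    have hinm : Measurable fun x2 => (∫⁻ t1, G t1 x2 ^ p1 ∂lam1) ^ (1 / p1) := by
      apply Measurable.pow_const
      exact Measurable.lintegral_prod_left
        (f := fun t1 x2 => G t1 x2 ^ p1) (hGm.pow_const p1)
    calc (∫⁻ x2, (∫⁻ x1, (∫⁻ t1, k1 x1 t1 * G t1 x2 ∂lam1) ^ r1 ∂mu1) ^ (r2 / r1)
          ∂mu2) ^ (1 / r2)
        ≤ (∫⁻ x2, (C1 * (∫⁻ t1, G t1 x2 ^ p1 ∂lam1) ^ (1 / p1)) ^ r2 ∂mu2) ^ (1 / r2) := by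
          refine ENNReal.rpow_le_rpow (lintegral_mono fun x2 => ?_) (by positivity)
          rw [rpow_div_eq_rpow_one_div_rpow _ r2 r1]
          refine ENNReal.rpow_le_rpow ?_ hr2.le
          exact hK1 (fun t1 => G t1 x2) (hGm.comp (measurable_id.prodMk measurable_const))
      _ = C1 * (∫⁻ x2, ((∫⁻ t1, G t1 x2 ^ p1 ∂lam1) ^ (1 / p1)) ^ r2 ∂mu2) ^ (1 / r2) :=
          lintegral_const_mul_rpow mu2 hinm hr2
      _ = C1 * (∫⁻ x2, (∫⁻ t1, G t1 x2 ^ p1 ∂lam1) ^ (r2 / p1) ∂mu2) ^ (1 / r2) := by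
          congr 1
          refine congrArg (· ^ (1 / r2)) (lintegral_congr fun x2 => ?_)
          rw [← rpow_div_eq_rpow_one_div_rpow]
  rcases le_or_gt p1 r2 with hc2 | hc2
  · -- Case II.a : p1 ≤ r2
    simp only [hKf1]
    refine le_trans hstep12 ?_
    calc C1 * (∫⁻ x2, (∫⁻ t1, G t1 x2 ^ p1 ∂lam1) ^ (r2 / p1) ∂mu2) ^ (1 / r2)
        ≤ C1 * (∫⁻ t1, (∫⁻ x2, G t1 x2 ^ r2 ∂mu2) ^ (p1 / r2) ∂lam1) ^ (1 / p1) :=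
          mul_le_mul_right (mixed_swap hGm hp1 hc2) _
      _ ≤ C1 * (C2 * (∫⁻ t1, (∫⁻ t2, f (t1, t2) ^ p2 ∂lam2) ^ (p1 / p2) ∂lam1) ^ (1 / p1)) :=
          mul_le_mul_right hend _
      _ = C1 * C2 * (∫⁻ t1, (∫⁻ t2, f (t1, t2) ^ p2 ∂lam2) ^ (p1 / p2) ∂lam1) ^ (1 / p1) :=
          (mul_assoc _ _ _).symm
  -- now r2 < p1, hence 1 ≤ p1
  have hp1' : (1:ℝ) ≤ p1 := hr2'.trans hc2.le
  rcases le_or_gt p1 p2 with hc3 | hc3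
  · -- Case II.b : p1 ≤ p2
    set Φ2 : T2 → ℝ≥0∞ := fun t2 => (∫⁻ t1, f (t1, t2) ^ p1 ∂lam1) ^ (1 / p1) with hΦ2def
    have hΦ2m : Measurable Φ2 := by
      apply Measurable.pow_const
      exact Measurable.lintegral_prod_left
        (f := fun t1 t2 => f (t1, t2) ^ p1) (hf.pow_const p1)
    have hgswap : Measurable (uncurry fun t2 t1 => f (t1, t2)) := hf.comp measurable_swap
    simp only [hKf1]
    refine le_trans hstep12 ?_
    calc C1 * (∫⁻ x2, (∫⁻ t1, G t1 x2 ^ p1 ∂lam1) ^ (r2 / p1) ∂mu2) ^ (1 / r2)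
        ≤ C1 * (∫⁻ x2, (∫⁻ t2, k2 x2 t2 * Φ2 t2 ∂lam2) ^ r2 ∂mu2) ^ (1 / r2) := by
          refine mul_le_mul_right
            (ENNReal.rpow_le_rpow (lintegral_mono fun x2 => ?_) (by positivity)) _
          rw [rpow_div_eq_rpow_one_div_rpow _ r2 p1]
          refine ENNReal.rpow_le_rpow ?_ hr2.le
          exact mink_kernel (hk2s x2) hgswap hp1'
      _ ≤ C1 * (C2 * (∫⁻ t2, Φ2 t2 ^ p2 ∂lam2) ^ (1 / p2)) :=
          mul_le_mul_right (hK2 Φ2 hΦ2m) _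
      _ = C1 * C2 * (∫⁻ t2, (∫⁻ t1, f (t1, t2) ^ p1 ∂lam1) ^ (p2 / p1) ∂lam2) ^ (1 / p2) := by
          rw [mul_assoc]
          congr 1
          refine congrArg (fun z => C2 * z ^ (1 / p2)) (lintegral_congr fun t2 => ?_)
          rw [hΦ2def, ← rpow_div_eq_rpow_one_div_rpow]
      _ ≤ C1 * C2 * (∫⁻ t1, (∫⁻ t2, f (t1, t2) ^ p2 ∂lam2) ^ (p1 / p2) ∂lam1) ^ (1 / p1) :=
          mul_le_mul_right (mixed_swap hfu hp1 hc3) _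
  · -- Case II.c : r1 ≤ p2
    have hc4 : r1 ≤ p2 := by
      have hmax : max p2 r2 < p1 := max_lt hc3 hc2
      rcases le_total p1 r1 with h | h
      · rw [min_eq_left h] at hmm
        exact absurd (lt_of_le_of_lt hmm hmax) (lt_irrefl _)
      · rw [min_eq_right h] at hmm
        rcases le_max_iff.1 hmm with h' | h'
        · exact h'
        · exact absurd h' (not_le.2 hc1)
    have hp2' : (1:ℝ) ≤ p2 := hr1'.trans hc4
    set Ψ : T2 → ℝ≥0∞ := fun t2 => (∫⁻ x1, H x1 t2 ^ r1 ∂mu1) ^ (1 / r1) with hΨdef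
    have hΨm : Measurable Ψ := by
      apply Measurable.pow_const
      exact Measurable.lintegral_prod_left
        (f := fun x1 t2 => H x1 t2 ^ r1) (hHm.pow_const r1)
    have hgm : Measurable (uncurry fun t2 x1 => H x1 t2) := hHm.comp measurable_swap
    simp only [hKf2]
    calc (∫⁻ x2, (∫⁻ x1, (∫⁻ t2, k2 x2 t2 * H x1 t2 ∂lam2) ^ r1 ∂mu1) ^ (r2 / r1)
          ∂mu2) ^ (1 / r2)
        ≤ (∫⁻ x2, (∫⁻ t2, k2 x2 t2 * Ψ t2 ∂lam2) ^ r2 ∂mu2) ^ (1 / r2) := by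
          refine ENNReal.rpow_le_rpow (lintegral_mono fun x2 => ?_) (by positivity)
          rw [rpow_div_eq_rpow_one_div_rpow _ r2 r1]
          refine ENNReal.rpow_le_rpow ?_ hr2.le
          exact mink_kernel (hk2s x2) hgm hr1'
      _ ≤ C2 * (∫⁻ t2, Ψ t2 ^ p2 ∂lam2) ^ (1 / p2) := hK2 Ψ hΨm
      _ = C2 * (∫⁻ t2, (∫⁻ x1, H x1 t2 ^ r1 ∂mu1) ^ (p2 / r1) ∂lam2) ^ (1 / p2) := by
          congr 1
          refine congrArg (· ^ (1 / p2)) (lintegral_congr fun t2 => ?_)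
          rw [hΨdef, ← rpow_div_eq_rpow_one_div_rpow]
      _ ≤ C2 * (∫⁻ x1, (∫⁻ t2, H x1 t2 ^ p2 ∂lam2) ^ (r1 / p2) ∂mu1) ^ (1 / r1) :=
          mul_le_mul_right (mixed_swap hHm hr1 hc4) _
      _ ≤ C2 * (∫⁻ x1, (∫⁻ t1, k1 x1 t1 * ψ t1 ∂lam1) ^ r1 ∂mu1) ^ (1 / r1) := by
          refine mul_le_mul_right
            (ENNReal.rpow_le_rpow (lintegral_mono fun x1 => ?_) (by positivity)) _
          rw [rpow_div_eq_rpow_one_div_rpow _ r1 p2]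
          refine ENNReal.rpow_le_rpow ?_ hr1.le
          exact mink_kernel (hk1s x1) hfu hp2'
      _ ≤ C2 * (C1 * (∫⁻ t1, ψ t1 ^ p1 ∂lam1) ^ (1 / p1)) :=
          mul_le_mul_right (hK1 ψ hψm) _
      _ = C1 * C2 * (∫⁻ t1, (∫⁻ t2, f (t1, t2) ^ p2 ∂lam2) ^ (p1 / p2) ∂lam1) ^ (1 / p1) := by
          have hXY : (∫⁻ t1, ψ t1 ^ p1 ∂lam1)
              = ∫⁻ t1, (∫⁻ t2, f (t1, t2) ^ p2 ∂lam2) ^ (p1 / p2) ∂lam1 := by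
            refine lintegral_congr fun t1 => ?_
            rw [hψdef, ← rpow_div_eq_rpow_one_div_rpow]
          rw [hXY, ← mul_assoc, mul_comm C2 C1]
end

section
/- Let $p_1,q_1,r_1\in[1,\infty)$ with $1/p_1+1/q_1=1/r_1+1$, and let $f,g:\mathbb{R}\times\mathbb{R}^{n-1}\to[0,\infty]$ be measurable. Define $F(\hat{y})=\left(\int_{\mathbb{R}}f(y_1,\hat{y})^{p_1}dy_1\right)^{1/p_1}$ and $G(\hat{t})=\left(\int_{\mathbb{R}}g(t_1,\hat{t})^{q_1}dt_1\right)^{1/q_1}$. Then for every $(x_1,\hat{x})$, $\left(\int_{\mathbb{R}}(f*g)(x_1,\hat{x})^{r_1}dx_1\right)^{1/r_1}\le (F*G)(\hat{x})$, where the left convolution is over $\mathbb{R}^n$ and the right convolution is over $\mathbb{R}^{n-1}$. -/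
open MeasureTheory ENNReal

private lemma rpow_iSup_nat {r : ℝ} (hr : 0 < r) (g : ℕ → ℝ≥0∞) :
    (⨆ n, g n) ^ r = ⨆ n, g n ^ r :=
  Monotone.map_iSup_of_continuousAt ENNReal.continuous_rpow_const.continuousAt
    (fun _ _ h => ENNReal.rpow_le_rpow h hr.le)
    (by simp [ENNReal.zero_rpow_of_pos hr])

private lemma hind_le_one {γ : Type*} (s : Set γ) (z : γ) :
    s.indicator (1 : γ → ℝ≥0∞) z ≤ 1 := by
  unfold Set.indicator
  split <;> simp

private lemma holder3 {α : Type*} [MeasurableSpace α] {μ : Measure α}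
    {f1 f2 f3 : α → ℝ≥0∞} (h1 : AEMeasurable f1 μ) (h2 : AEMeasurable f2 μ)
    (h3 : AEMeasurable f3 μ) {a b c : ℝ} (ha : 0 ≤ a) (hb : 0 ≤ b) (hc : 0 ≤ c)
    (habc : a + b + c = 1) :
    ∫⁻ x, f1 x ^ a * f2 x ^ b * f3 x ^ c ∂μ ≤
      (∫⁻ x, f1 x ∂μ) ^ a * (∫⁻ x, f2 x ∂μ) ^ b * (∫⁻ x, f3 x ∂μ) ^ c := by
  have := ENNReal.lintegral_prod_norm_pow_le (μ := μ) (Finset.univ : Finset (Fin 3))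
    (f := ![f1, f2, f3]) (p := ![a, b, c]) ?_ ?_ ?_
  · simpa [Fin.prod_univ_three] using this
  · intro i _; fin_cases i <;> assumption
  · simp [Fin.sum_univ_three, habc]
  · intro i _; fin_cases i <;> assumption

/-- Minkowski's integral inequality (finite case). -/
private lemma minkowski_core {α β : Type*} [MeasurableSpace α] [MeasurableSpace β]
    {μ : Measure α} {ν : Measure β} [SigmaFinite μ] [SigmaFinite ν]
    {H : α → β → ℝ≥0∞} (hH : Measurable (Function.uncurry H)) {r : ℝ} (hr : 1 ≤ r)
    (hfin : (∫⁻ x, (∫⁻ y, H x y ∂ν) ^ r ∂μ) ≠ ∞) :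
    (∫⁻ x, (∫⁻ y, H x y ∂ν) ^ r ∂μ) ^ (1 / r) ≤
      ∫⁻ y, (∫⁻ x, H x y ^ r ∂μ) ^ (1 / r) ∂ν := by
  have hΦ : Measurable fun x => ∫⁻ y, H x y ∂ν := hH.lintegral_prod_right
  set Φ : α → ℝ≥0∞ := fun x => ∫⁻ y, H x y ∂ν with hΦdef
  rcases eq_or_lt_of_le hr with hr1 | hr1
  · simp only [← hr1, ENNReal.rpow_one, one_div, inv_one]
    exact le_of_eq (lintegral_lintegral_swap hH.aemeasurable)
  set I := ∫⁻ x, Φ x ^ r ∂μ with hI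
  set J := ∫⁻ y, (∫⁻ x, H x y ^ r ∂μ) ^ (1 / r) ∂ν with hJ
  by_cases hI0 : I = 0
  · rw [hI0, ENNReal.zero_rpow_of_pos (by positivity)]
    exact zero_le
  have hr0 : (0:ℝ) < r := lt_of_lt_of_le one_pos hr
  have hrinv : 1/r ≤ 1 := by rw [div_le_one hr0]; linarith
  have hexp : (0:ℝ) ≤ 1 - 1/r := by linarith
  have hrc : (r / (r - 1)).HolderConjugate r := (Real.HolderConjugate.conjExponent hr1).symm
  have hsplit : ∀ X : ℝ≥0∞, X ^ (r - 1) * X = X ^ r := by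
    intro X
    nth_rewrite 2 [← ENNReal.rpow_one X]
    rw [← ENNReal.rpow_add_of_nonneg _ _ (by linarith) zero_le_one]
    norm_num
  have hItop : I ^ (1 - 1/r) ≠ ∞ := ENNReal.rpow_ne_top_of_nonneg hexp hfin
  have key : I ≤ I ^ (1 - 1/r) * J := by
    have e3 : ∀ y, (∫⁻ x, Φ x ^ (r - 1) * H x y ∂μ) ≤
        I ^ (1 - 1/r) * (∫⁻ x, H x y ^ r ∂μ) ^ (1 / r) := by
      intro y
      have hhy : Measurable fun x => H x y := hH.comp measurable_prodMk_right
      have := ENNReal.lintegral_mul_le_Lp_mul_Lq μ hrc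
        ((hΦ.pow_const (r-1)).aemeasurable) hhy.aemeasurable
      refine le_trans this (le_of_eq ?_)
      have h1 : r - 1 ≠ 0 := by linarith
      congr 1
      have e : (∫⁻ a, (Φ a ^ (r - 1)) ^ (r / (r - 1)) ∂μ) = I := by
        rw [hI]
        congr 1 with a
        rw [← ENNReal.rpow_mul]
        congr 1
        field_simp
      rw [e]
      congr 1
      rw [one_div, inv_div]
      field_simp
    calc I = ∫⁻ x, Φ x ^ (r - 1) * Φ x ∂μ := by
            rw [hI]; congr 1 with x; rw [hsplit]
      _ = ∫⁻ x, ∫⁻ y, Φ x ^ (r - 1) * H x y ∂ν ∂μ := by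
            congr 1 with x
            rw [lintegral_const_mul _ (show Measurable fun y => H x y from
              hH.comp measurable_prodMk_left)]
      _ = ∫⁻ y, ∫⁻ x, Φ x ^ (r - 1) * H x y ∂μ ∂ν :=
            lintegral_lintegral_swap (((hΦ.comp measurable_fst).pow_const _).mul hH).aemeasurable
      _ ≤ ∫⁻ y, I ^ (1 - 1/r) * (∫⁻ x, H x y ^ r ∂μ) ^ (1 / r) ∂ν := lintegral_mono e3
      _ = I ^ (1 - 1/r) * J := lintegral_const_mul' _ _ hItop
  have hc0 : I ^ (1 - 1/r) ≠ 0 := by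
    simp only [ne_eq, ENNReal.rpow_eq_zero_iff, not_or]
    exact ⟨fun h => hI0 h.1, fun h => hfin h.1⟩
  have e4 : I ^ (1 - 1/r) * I ^ (1/r) = I := by
    rw [← ENNReal.rpow_add_of_nonneg _ _ hexp (by positivity)]
    norm_num
  rw [← ENNReal.mul_le_mul_iff_right hc0 hItop, e4]
  exact key

/-- Minkowski's integral inequality for `ℝ≥0∞`-valued functions. -/
private lemma minkowski_int {α β : Type*} [MeasurableSpace α] [MeasurableSpace β]
    {μ : Measure α} {ν : Measure β} [SigmaFinite μ] [SigmaFinite ν]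
    {H : α → β → ℝ≥0∞} (hH : Measurable (Function.uncurry H)) {r : ℝ} (hr : 1 ≤ r) :
    (∫⁻ x, (∫⁻ y, H x y ∂ν) ^ r ∂μ) ^ (1 / r) ≤
      ∫⁻ y, (∫⁻ x, H x y ^ r ∂μ) ^ (1 / r) ∂ν := by
  have hr0 : (0:ℝ) < r := lt_of_lt_of_le one_pos hr
  set A : ℕ → Set α := spanningSets μ with hAdef
  set B : ℕ → Set β := spanningSets ν with hBdef
  set Hn : ℕ → α → β → ℝ≥0∞ := fun n x y =>
    (A n).indicator 1 x * (B n).indicator 1 y * min (H x y) n with hHndef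
  have hmono : ∀ x y, Monotone fun n => Hn n x y := by
    intro x y n k hnk
    refine mul_le_mul' (mul_le_mul' ?_ ?_) ?_
    · exact Set.indicator_le_indicator_of_subset (monotone_spanningSets μ hnk)
        (fun _ => zero_le) x
    · exact Set.indicator_le_indicator_of_subset (monotone_spanningSets ν hnk)
        (fun _ => zero_le) y
    · exact min_le_min le_rfl (Nat.cast_le.mpr hnk)
  have hle : ∀ n x y, Hn n x y ≤ H x y := by
    intro n x y
    calc Hn n x y ≤ 1 * 1 * min (H x y) n :=
          mul_le_mul' (mul_le_mul' (hind_le_one (A n) x) (hind_le_one (B n) y)) le_rfl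
      _ ≤ H x y := by rw [one_mul, one_mul]; exact min_le_left _ _
  have hsup : ∀ x y, (⨆ n, Hn n x y) = H x y := by
    intro x y
    refine le_antisymm (iSup_le fun n => hle n x y) ?_
    obtain ⟨n1, hn1⟩ : ∃ n, x ∈ A n := (Set.iUnion_eq_univ_iff.mp (iUnion_spanningSets μ)) x
    obtain ⟨n2, hn2⟩ : ∃ n, y ∈ B n := (Set.iUnion_eq_univ_iff.mp (iUnion_spanningSets ν)) y
    have hHrepr : H x y = ⨆ n : ℕ, min (H x y) n := by
      rw [show (fun n : ℕ => min (H x y) n) = fun n : ℕ => H x y ⊓ (n : ℝ≥0∞) from rfl,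
        ← inf_iSup_eq, ENNReal.iSup_natCast, inf_top_eq]
    conv_lhs => rw [hHrepr]
    refine iSup_le fun n => ?_
    set N := max n (max n1 n2) with hN
    have hx : x ∈ A N := monotone_spanningSets μ (le_trans (le_max_left n1 n2) (le_max_right _ _)) hn1
    have hy : y ∈ B N := monotone_spanningSets ν (le_trans (le_max_right n1 n2) (le_max_right _ _)) hn2
    have : min (H x y) n ≤ Hn N x y := by
      rw [hHndef]
      simp only [Set.indicator_of_mem hx, Set.indicator_of_mem hy, Pi.one_apply, one_mul]
      exact min_le_min le_rfl (Nat.cast_le.mpr (le_max_left _ _))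
    exact le_trans this (le_iSup (fun k => Hn k x y) N)
  have hHnmeas : ∀ n, Measurable (Function.uncurry (Hn n)) := by
    intro n
    have : Function.uncurry (Hn n) = fun z : α × β =>
        (A n).indicator 1 z.1 * (B n).indicator 1 z.2 * min (Function.uncurry H z) n := rfl
    rw [this]
    exact (((measurable_one.indicator (measurableSet_spanningSets μ n)).comp
      measurable_fst).mul ((measurable_one.indicator (measurableSet_spanningSets ν n)).comp
      measurable_snd)).mul (hH.min measurable_const)
  have hmeasy : ∀ n x, Measurable fun y => Hn n x y := fun n x =>
    (hHnmeas n).comp measurable_prodMk_left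
  have e1 : ∀ x, (∫⁻ y, H x y ∂ν) = ⨆ n, ∫⁻ y, Hn n x y ∂ν := by
    intro x
    calc (∫⁻ y, H x y ∂ν) = ∫⁻ y, ⨆ n, Hn n x y ∂ν := by
          congr 1 with y; rw [hsup]
      _ = ⨆ n, ∫⁻ y, Hn n x y ∂ν :=
          lintegral_iSup (fun n => hmeasy n x) (fun n k h y => hmono x y h)
  have e2 : (∫⁻ x, (∫⁻ y, H x y ∂ν) ^ r ∂μ)
      = ⨆ n, ∫⁻ x, (∫⁻ y, Hn n x y ∂ν) ^ r ∂μ := by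
    calc (∫⁻ x, (∫⁻ y, H x y ∂ν) ^ r ∂μ)
        = ∫⁻ x, ⨆ n, (∫⁻ y, Hn n x y ∂ν) ^ r ∂μ := by
          congr 1 with x
          rw [e1 x, rpow_iSup_nat hr0]
      _ = ⨆ n, ∫⁻ x, (∫⁻ y, Hn n x y ∂ν) ^ r ∂μ := by
          refine lintegral_iSup (fun n => ((hHnmeas n).lintegral_prod_right).pow_const r)
            (fun n k h x => ENNReal.rpow_le_rpow (lintegral_mono fun y => hmono x y h) hr0.le)
  rw [e2, rpow_iSup_nat (by positivity : (0:ℝ) < 1/r)]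
  refine iSup_le fun n => ?_
  have hfin : (∫⁻ x, (∫⁻ y, Hn n x y ∂ν) ^ r ∂μ) ≠ ∞ := by
    set c : ℝ≥0∞ := (n : ℝ≥0∞) * ν (B n) with hc
    have hc_ne : c ≠ ∞ := ENNReal.mul_ne_top (ENNReal.natCast_ne_top n)
      (measure_spanningSets_lt_top ν n).ne
    have hbint : ∀ x, (∫⁻ y, Hn n x y ∂ν) ≤ (A n).indicator 1 x * c := by
      intro x
      calc (∫⁻ y, Hn n x y ∂ν)
          ≤ ∫⁻ y, (A n).indicator 1 x * ((B n).indicator 1 y * n) ∂ν := by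
            refine lintegral_mono fun y => ?_
            rw [hHndef]
            calc (A n).indicator 1 x * (B n).indicator 1 y * min (H x y) n
                ≤ (A n).indicator 1 x * (B n).indicator 1 y * n :=
                  mul_le_mul' le_rfl (min_le_right _ _)
              _ = (A n).indicator 1 x * ((B n).indicator 1 y * n) := mul_assoc _ _ _
        _ = (A n).indicator 1 x * ∫⁻ y, (B n).indicator 1 y * n ∂ν :=
            lintegral_const_mul' _ _ ((lt_of_le_of_lt (hind_le_one (A n) x)
              ENNReal.one_lt_top).ne)
        _ = (A n).indicator 1 x * c := by
            rw [lintegral_mul_const _ (measurable_one.indicator (measurableSet_spanningSets ν n)),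
              lintegral_indicator_one (measurableSet_spanningSets ν n), hc, mul_comm (ν (B n))]
    have hmain : (∫⁻ x, (∫⁻ y, Hn n x y ∂ν) ^ r ∂μ) ≤ c ^ r * μ (A n) := by
      calc (∫⁻ x, (∫⁻ y, Hn n x y ∂ν) ^ r ∂μ)
          ≤ ∫⁻ x, (A n).indicator (fun _ => c ^ r) x ∂μ := by
            refine lintegral_mono fun x => ?_
            refine le_trans (ENNReal.rpow_le_rpow (hbint x) hr0.le) ?_
            by_cases hx : x ∈ A n
            · rw [Set.indicator_of_mem hx, Set.indicator_of_mem hx, Pi.one_apply, one_mul]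
            · rw [Set.indicator_of_notMem hx, Set.indicator_of_notMem hx, zero_mul,
                ENNReal.zero_rpow_of_pos hr0]
        _ = c ^ r * μ (A n) := lintegral_indicator_const (measurableSet_spanningSets μ n) _
    exact ne_top_of_le_ne_top (ENNReal.mul_ne_top
      (ENNReal.rpow_ne_top_of_nonneg hr0.le hc_ne)
      (measure_spanningSets_lt_top μ n).ne) hmain
  refine le_trans (minkowski_core (hHnmeas n) hr hfin) ?_
  refine lintegral_mono fun y => ?_
  exact ENNReal.rpow_le_rpow (lintegral_mono fun x =>
    ENNReal.rpow_le_rpow (hle n x y) hr0.le) (by positivity)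

/-- One-dimensional Young's convolution inequality for `ℝ≥0∞`-valued functions. -/
private lemma young1d {p q r : ℝ} (hp : 1 ≤ p) (hq : 1 ≤ q) (hr : 1 ≤ r)
    (hpqr : 1 / p + 1 / q = 1 / r + 1) {f g : ℝ → ℝ≥0∞}
    (hf : Measurable f) (hg : Measurable g) :
    (∫⁻ x : ℝ, (∫⁻ t : ℝ, f (x - t) * g t) ^ r) ^ (1 / r) ≤
      (∫⁻ y : ℝ, f y ^ p) ^ (1 / p) * (∫⁻ t : ℝ, g t ^ q) ^ (1 / q) := by
  have hp0 : (0:ℝ) < p := lt_of_lt_of_le one_pos hp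
  have hq0 : (0:ℝ) < q := lt_of_lt_of_le one_pos hq
  have hr0 : (0:ℝ) < r := lt_of_lt_of_le one_pos hr
  have hp1 : 1 / p ≤ 1 := by rw [div_le_one hp0]; linarith
  have hq1 : 1 / q ≤ 1 := by rw [div_le_one hq0]; linarith
  set b : ℝ := 1 / p - 1 / r with hbdef
  set c : ℝ := 1 / q - 1 / r with hcdef
  have hb : 0 ≤ b := by rw [hbdef]; linarith [hpqr, hq1]
  have hc : 0 ≤ c := by rw [hcdef]; linarith [hpqr, hp1]
  have habc : 1 / r + b + c = 1 := by rw [hbdef, hcdef]; linarith [hpqr]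
  set A : ℝ≥0∞ := ∫⁻ y : ℝ, f y ^ p with hA
  set B : ℝ≥0∞ := ∫⁻ t : ℝ, g t ^ q with hB
  set W : ℝ → ℝ≥0∞ := fun x => ∫⁻ t : ℝ, f (x - t) ^ p * g t ^ q with hW
  have hsub : ∀ x : ℝ, Measurable fun t : ℝ => f (x - t) := fun x =>
    hf.comp (measurable_const.sub measurable_id)
  have hWmeas : Measurable W := by
    apply Measurable.lintegral_prod_right (f := fun (x t : ℝ) => f (x - t) ^ p * g t ^ q)
    exact ((hf.comp (measurable_fst.sub measurable_snd)).pow_const p).mul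
      ((hg.comp measurable_snd).pow_const q)
  -- pointwise Hölder bound
  have step1 : ∀ x : ℝ, (∫⁻ t : ℝ, f (x - t) * g t) ≤ W x ^ (1/r) * A ^ b * B ^ c := by
    intro x
    have hA' : (∫⁻ t : ℝ, f (x - t) ^ p) = A := by
      rw [hA]
      exact (Measure.measurePreserving_sub_left volume x).lintegral_comp (hf.pow_const p)
    have key := holder3 (μ := (volume : Measure ℝ))
      (f1 := fun t => f (x - t) ^ p * g t ^ q) (f2 := fun t => f (x - t) ^ p)
      (f3 := fun t => g t ^ q)
      ((((hsub x).pow_const p).mul (hg.pow_const q)).aemeasurable)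
      (((hsub x).pow_const p).aemeasurable) ((hg.pow_const q).aemeasurable)
      (le_of_lt (by positivity : (0:ℝ) < 1/r)) hb hc habc
    have eint : ∀ t : ℝ, (f (x - t) ^ p * g t ^ q) ^ (1/r) * (f (x - t) ^ p) ^ b
        * (g t ^ q) ^ c = f (x - t) * g t := by
      intro t
      set X := f (x - t)
      set Y := g t
      have hX : (X ^ p) ^ (1/r) * (X ^ p) ^ b = X := by
        rw [← ENNReal.rpow_mul, ← ENNReal.rpow_mul,
          ← ENNReal.rpow_add_of_nonneg _ _ (by positivity) (by positivity),
          show p * (1/r) + p * b = 1 from by rw [hbdef]; field_simp; ring, ENNReal.rpow_one]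
      have hY : (Y ^ q) ^ (1/r) * (Y ^ q) ^ c = Y := by
        rw [← ENNReal.rpow_mul, ← ENNReal.rpow_mul,
          ← ENNReal.rpow_add_of_nonneg _ _ (by positivity) (by positivity),
          show q * (1/r) + q * c = 1 from by rw [hcdef]; field_simp; ring, ENNReal.rpow_one]
      calc (X ^ p * Y ^ q) ^ (1/r) * (X ^ p) ^ b * (Y ^ q) ^ c
          = (X ^ p) ^ (1/r) * (Y ^ q) ^ (1/r) * (X ^ p) ^ b * (Y ^ q) ^ c := by
            rw [ENNReal.mul_rpow_of_nonneg _ _ (by positivity : (0:ℝ) ≤ 1/r)]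
        _ = ((X ^ p) ^ (1/r) * (X ^ p) ^ b) * ((Y ^ q) ^ (1/r) * (Y ^ q) ^ c) := by
            ring
        _ = X * Y := by rw [hX, hY]
    calc (∫⁻ t : ℝ, f (x - t) * g t)
        = ∫⁻ t : ℝ, (f (x - t) ^ p * g t ^ q) ^ (1/r) * (f (x - t) ^ p) ^ b
            * (g t ^ q) ^ c := by
          congr 1 with t
          rw [eint t]
      _ ≤ W x ^ (1/r) * (∫⁻ t : ℝ, f (x - t) ^ p) ^ b * B ^ c := key
      _ = W x ^ (1/r) * A ^ b * B ^ c := by rw [hA']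
  -- ∫ W = A * B
  have hWint : (∫⁻ x : ℝ, W x) = A * B := by
    rw [hW]
    rw [lintegral_lintegral_swap (((hf.comp (measurable_fst.sub measurable_snd)).pow_const p).mul
      ((hg.comp measurable_snd).pow_const q)).aemeasurable]
    calc (∫⁻ t : ℝ, ∫⁻ x : ℝ, f (x - t) ^ p * g t ^ q)
        = ∫⁻ t : ℝ, (∫⁻ x : ℝ, f (x - t) ^ p) * g t ^ q := by
          congr 1 with t
          rw [lintegral_mul_const _ (show Measurable fun x : ℝ => f (x - t) ^ p from
            (hf.pow_const p).comp (measurable_sub_const t))]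
      _ = ∫⁻ t : ℝ, A * g t ^ q := by
          congr 1 with t
          congr 1
          exact lintegral_sub_right_eq_self (fun y => f y ^ p) t
      _ = A * B := lintegral_const_mul _ (hg.pow_const q)
  -- integrate step1
  have step2 : (∫⁻ x : ℝ, (∫⁻ t : ℝ, f (x - t) * g t) ^ r) ≤
      A * B * (A ^ (b * r) * B ^ (c * r)) := by
    calc (∫⁻ x : ℝ, (∫⁻ t : ℝ, f (x - t) * g t) ^ r)
        ≤ ∫⁻ x : ℝ, W x * (A ^ (b * r) * B ^ (c * r)) := by
          apply lintegral_mono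
          intro x
          calc (∫⁻ t : ℝ, f (x - t) * g t) ^ r
              ≤ (W x ^ (1/r) * A ^ b * B ^ c) ^ r :=
                ENNReal.rpow_le_rpow (step1 x) hr0.le
            _ = W x * (A ^ (b * r) * B ^ (c * r)) := by
                rw [ENNReal.mul_rpow_of_nonneg _ _ hr0.le,
                  ENNReal.mul_rpow_of_nonneg _ _ hr0.le,
                  ← ENNReal.rpow_mul, ← ENNReal.rpow_mul, ← ENNReal.rpow_mul,
                  one_div, inv_mul_cancel₀ hr0.ne', ENNReal.rpow_one, mul_assoc]
      _ = A * B * (A ^ (b * r) * B ^ (c * r)) := by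
          rw [lintegral_mul_const _ hWmeas, hWint]
  -- conclude
  calc (∫⁻ x : ℝ, (∫⁻ t : ℝ, f (x - t) * g t) ^ r) ^ (1 / r)
      ≤ (A * B * (A ^ (b * r) * B ^ (c * r))) ^ (1 / r) :=
        ENNReal.rpow_le_rpow step2 (by positivity)
    _ = A ^ (1/p) * B ^ (1/q) := by
        have eA : A * A ^ (b * r) = A ^ (1 + b * r) := by
          rw [ENNReal.rpow_add_of_nonneg _ _ zero_le_one (by positivity), ENNReal.rpow_one]
        have eB : B * B ^ (c * r) = B ^ (1 + c * r) := by
          rw [ENNReal.rpow_add_of_nonneg _ _ zero_le_one (by positivity), ENNReal.rpow_one]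
        calc (A * B * (A ^ (b * r) * B ^ (c * r))) ^ (1 / r)
            = ((A * A ^ (b * r)) * (B * B ^ (c * r))) ^ (1 / r) := by ring_nf
          _ = (A ^ (1 + b * r)) ^ (1/r) * (B ^ (1 + c * r)) ^ (1/r) := by
              rw [eA, eB, ENNReal.mul_rpow_of_nonneg _ _ (by positivity : (0:ℝ) ≤ 1/r)]
          _ = A ^ (1/p) * B ^ (1/q) := by
              rw [← ENNReal.rpow_mul, ← ENNReal.rpow_mul]
              congr 1
              · congr 1
                rw [hbdef]; field_simp; ring
              · congr 1
                rw [hcdef]; field_simp; ring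

/-- The recursive step in the mixed-norm Young inequality: the `L^{r₁}` norm in the
first variable of a convolution on `ℝ × ℝ^{n-1}` is dominated by the convolution on
`ℝ^{n-1}` of the `L^{p₁}` and `L^{q₁}` norms in the first variable. -/
theorem young_recursive_step
    (m : ℕ) (p1 q1 r1 : ℝ) (hp : 1 ≤ p1) (hq : 1 ≤ q1) (hr : 1 ≤ r1)
    (hpqr : 1 / p1 + 1 / q1 = 1 / r1 + 1)
    (f g : ℝ × (Fin m → ℝ) → ℝ≥0∞) (hf : Measurable f) (hg : Measurable g)
    (xh : Fin m → ℝ) :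
    (∫⁻ x1 : ℝ,
        (∫⁻ t : ℝ × (Fin m → ℝ), f ((x1, xh) - t) * g t) ^ r1) ^ (1 / r1)
      ≤ ∫⁻ th : Fin m → ℝ,
          (∫⁻ y1 : ℝ, f (y1, xh - th) ^ p1) ^ (1 / p1)
            * (∫⁻ t1 : ℝ, g (t1, th) ^ q1) ^ (1 / q1) := by
  have key : ∀ x1 : ℝ, (∫⁻ t : ℝ × (Fin m → ℝ), f ((x1, xh) - t) * g t)
      = ∫⁻ th, ∫⁻ t1, f (x1 - t1, xh - th) * g (t1, th) := by
    intro x1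
    rw [MeasureTheory.Measure.volume_eq_prod, lintegral_prod_symm (fun t => f ((x1, xh) - t) * g t)
      (((show Measurable fun t : ℝ × (Fin m → ℝ) => f ((x1, xh) - t) from
        hf.comp (measurable_const.sub measurable_id)).mul hg).aemeasurable)]
    rfl
  simp_rw [key]
  have hH : Measurable (Function.uncurry fun (x1 : ℝ) (th : Fin m → ℝ) =>
      ∫⁻ t1, f (x1 - t1, xh - th) * g (t1, th)) := by
    apply Measurable.lintegral_prod_right (f := fun (z : ℝ × (Fin m → ℝ)) (t1 : ℝ) =>
      f (z.1 - t1, xh - z.2) * g (t1, z.2))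
    apply Measurable.mul
    · exact hf.comp (by fun_prop)
    · exact hg.comp (by fun_prop)
  refine le_trans (minkowski_int hH hr) (lintegral_mono fun th => ?_)
  exact young1d hp hq hr hpqr
    (f := fun y1 => f (y1, xh - th)) (g := fun t1 => g (t1, th))
    (hf.comp (by fun_prop)) (hg.comp (by fun_prop))
end
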